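/- arXiv:2405.03161 — 7 statements merged into one kernel-verified Lean document; each statement's English description precedes it below -/
import Mathlib

section
/- Let n be a natural number, let g : ℂ → ℂ be an entire (everywhere complex-differentiable) function, and let λ_0, …, λ_n be real numbers. Then for every z ∈ ℂ, the Wronskian at z of the n+1 functions w ↦ exp(λ_j · g(w)) (j = 0, …, n) equals (∏_{0 ≤ i < j ≤ n} (λ_j − λ_i)) · (g′(z))^{n(n+1)/2} · exp((λ_0 + ⋯ + λ_n) · g(z)). -/
open Complex Finset

lemma entire_deriv {f : ℂ → ℂ} (hf : Differentiable ℂ f) : Differentiable ℂ (deriv f) := by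
  have h := (hf.differentiableOn.analyticOnNhd isOpen_univ).deriv
  exact fun z => (h z trivial).differentiableAt

noncomputable def bellc (g : ℂ → ℂ) : ℕ → ℕ → (ℂ → ℂ)
  | 0, 0 => fun _ => 1
  | 0, _+1 => fun _ => 0
  | (i+1), 0 => deriv (bellc g i 0)
  | (i+1), (k+1) => fun w => deriv (bellc g i (k+1)) w + bellc g i k w * deriv g w

lemma bellc_diff {g : ℂ → ℂ} (hg : Differentiable ℂ g) (i : ℕ) :
    ∀ k, Differentiable ℂ (bellc g i k) := by
  induction i with
  | zero => intro k; cases k <;> · simp only [bellc]; exact differentiable_const _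
  | succ i ih =>
    intro k
    cases k with
    | zero => exact entire_deriv (ih 0)
    | succ k => exact (entire_deriv (ih (k+1))).add ((ih k).mul (entire_deriv hg))

lemma bellc_zero (g : ℂ → ℂ) (i : ℕ) : ∀ k, i < k → bellc g i k = fun _ => 0 := by
  induction i with
  | zero => rintro (_|k) h; · omega
            · rfl
  | succ i ih =>
    rintro (_|k) h
    · omega
    · have h1 : bellc g i (k+1) = fun _ => 0 := ih (k+1) (by omega)
      have h2 : bellc g i k = fun _ => 0 := ih k (by omega)
      funext w
      simp [bellc, h1, h2]

lemma bellc_diag (g : ℂ → ℂ) (i : ℕ) : bellc g i i = fun w => (deriv g w) ^ i := by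
  induction i with
  | zero => funext w; simp [bellc]
  | succ i ih =>
    funext w
    simp only [bellc, bellc_zero g i (i+1) (by omega), ih]
    simp [pow_succ]

lemma key_deriv {g : ℂ → ℂ} (hg : Differentiable ℂ g) (c : ℂ) (i : ℕ) (w : ℂ) :
    iteratedDeriv i (fun w => Complex.exp (c * g w)) w =
      (∑ k ∈ Finset.range (i+1), bellc g i k w * c ^ k) * Complex.exp (c * g w) := by
  induction i generalizing w with
  | zero => simp [bellc]
  | succ i ih =>
    rw [iteratedDeriv_succ]
    have hfun : iteratedDeriv i (fun w => Complex.exp (c * g w)) =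
        fun x => (∑ k ∈ Finset.range (i+1), bellc g i k x * c ^ k) * Complex.exp (c * g x) := by
      funext x; exact ih x
    rw [hfun]
    -- derivatives
    have hF : HasDerivAt (fun x => ∑ k ∈ Finset.range (i+1), bellc g i k x * c ^ k)
        (∑ k ∈ Finset.range (i+1), deriv (bellc g i k) w * c ^ k) w := by
      apply HasDerivAt.fun_sum
      intro k _
      exact (((bellc_diff hg i k) w).hasDerivAt.mul_const _)
    have hE : HasDerivAt (fun x => Complex.exp (c * g x))
        (Complex.exp (c * g w) * (c * deriv g w)) w := by
      exact (((hg w).hasDerivAt.const_mul c)).cexp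
    have := (hF.fun_mul hE).deriv
    rw [this]
    -- now the algebraic identity on coefficients
    have hcoef : ∑ k ∈ Finset.range (i+2), bellc g (i+1) k w * c ^ k =
        ∑ k ∈ Finset.range (i+1), deriv (bellc g i k) w * c ^ k +
          (∑ k ∈ Finset.range (i+1), bellc g i k w * c ^ k) * (c * deriv g w) := by
      rw [Finset.sum_range_succ' _ (i+1)]
      have hsplit : ∀ k ∈ Finset.range (i+1),
          bellc g (i+1) (k+1) w * c ^ (k+1) =
            deriv (bellc g i (k+1)) w * c ^ (k+1) +
              bellc g i k w * c ^ k * (c * deriv g w) := by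
        intro k _
        simp only [bellc]
        ring
      rw [Finset.sum_congr rfl hsplit, Finset.sum_add_distrib]
      have h0 : (bellc g (i+1) 0 w) * c ^ 0 = deriv (bellc g i 0) w * c ^ 0 := rfl
      rw [h0]
      have htop : ∑ k ∈ Finset.range (i+1), deriv (bellc g i (k+1)) w * c ^ (k+1) +
          deriv (bellc g i 0) w * c ^ 0 =
          ∑ k ∈ Finset.range (i+2), deriv (bellc g i k) w * c ^ k := by
        rw [Finset.sum_range_succ' (fun k => deriv (bellc g i k) w * c ^ k) (i+1)]
      rw [add_right_comm, htop]
      have hlast : ∑ k ∈ Finset.range (i+2), deriv (bellc g i k) w * c ^ k =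
          ∑ k ∈ Finset.range (i+1), deriv (bellc g i k) w * c ^ k := by
        rw [Finset.sum_range_succ, bellc_zero g i (i+1) (by omega)]
        simp
      rw [hlast, ← Finset.sum_mul]
    rw [show i + 1 + 1 = i + 2 from rfl, hcoef]
    ring

/-- The Wronskian of the functions `w ↦ exp(λ_j g(w))`, for `g` entire and real `λ_j`,
equals `(∏_{i<j} (λ_j − λ_i)) · g'(z)^{n(n+1)/2} · exp((Σ λ_j) g(z))`. -/
theorem wronskian_exp_lambda_g (n : ℕ) (g : ℂ → ℂ) (hg : Differentiable ℂ g)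
    (l : Fin (n + 1) → ℝ) (z : ℂ) :
    Matrix.det (Matrix.of fun i j : Fin (n + 1) =>
        iteratedDeriv (i : ℕ) (fun w => Complex.exp ((l j : ℂ) * g w)) z) =
    (∏ i : Fin (n + 1), ∏ j ∈ Finset.Ioi i, ((l j : ℂ) - (l i : ℂ))) *
      deriv g z ^ (n * (n + 1) / 2) *
      Complex.exp ((∑ j : Fin (n + 1), (l j : ℂ)) * g z) := by
  set C : Matrix (Fin (n+1)) (Fin (n+1)) ℂ := Matrix.of fun i k => bellc g i k z with hC
  set V : Matrix (Fin (n+1)) (Fin (n+1)) ℂ :=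
    (Matrix.vandermonde (fun j => (l j : ℂ))).transpose with hV
  set E : Fin (n+1) → ℂ := fun j => Complex.exp ((l j : ℂ) * g z) with hE
  have hM : (Matrix.of fun i j : Fin (n + 1) =>
      iteratedDeriv (i : ℕ) (fun w => Complex.exp ((l j : ℂ) * g w)) z) =
      C * V * Matrix.diagonal E := by
    ext i j
    rw [Matrix.mul_apply, Matrix.of_apply]
    simp only [Matrix.mul_apply, Matrix.diagonal_apply, Matrix.transpose_apply,
      Matrix.vandermonde, hC, hV, hE, Matrix.of_apply]
    rw [Finset.sum_eq_single j (by intro b _ hb; simp [hb]) (by simp)]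
    simp only [if_pos rfl]
    rw [key_deriv hg]
    congr 1
    rw [Fin.sum_univ_eq_sum_range (fun k => bellc g i k z * (l j : ℂ) ^ k) (n+1)]
    rcases le_or_gt (n+1) ((i:ℕ)+1) with h | h
    · have : (i:ℕ) + 1 = n + 1 := by omega
      rw [this]
    · rw [← Finset.sum_range_add_sum_Ico _ (le_of_lt h)]
      have : ∑ k ∈ Finset.Ico ((i:ℕ)+1) (n+1), bellc g i k z * (l j : ℂ) ^ k = 0 := by
        apply Finset.sum_eq_zero
        intro k hk
        rw [Finset.mem_Ico] at hk
        rw [bellc_zero g i k (by omega)]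
        simp
      rw [this, add_zero]
  rw [hM, Matrix.det_mul, Matrix.det_mul, Matrix.det_diagonal]
  have hdetC : C.det = deriv g z ^ (n * (n + 1) / 2) := by
    rw [Matrix.det_of_lowerTriangular]
    · have : ∀ i : Fin (n+1), C i i = deriv g z ^ (i:ℕ) := by
        intro i; simp [hC, bellc_diag]
      rw [Finset.prod_congr rfl (fun i _ => this i), Finset.prod_pow_eq_pow_sum]
      congr 1
      rw [Fin.sum_univ_eq_sum_range (fun k => k) (n+1)]
      rw [Finset.sum_range_id, Nat.add_sub_cancel, Nat.mul_comm]
    · intro i j hij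
      simp only [OrderDual.toDual_lt_toDual] at hij
      simp [hC, bellc_zero g i j (by exact_mod_cast hij)]
  have hdetV : V.det = ∏ i : Fin (n + 1), ∏ j ∈ Finset.Ioi i, ((l j : ℂ) - (l i : ℂ)) := by
    rw [hV, Matrix.det_transpose, Matrix.det_vandermonde]
  have hprodE : ∏ j, E j = Complex.exp ((∑ j : Fin (n + 1), (l j : ℂ)) * g z) := by
    rw [Finset.sum_mul, ← Complex.exp_sum]
  rw [hdetC, hdetV, hprodE]
  ring
end

section
/- Let n be a natural number, let g : ℂ → ℂ be an entire nonconstant function, and let λ_0, …, λ_n be pairwise distinct real numbers. Then the n+1 functions ℂ → ℂ given by z ↦ exp(λ_j · g(z)) (j = 0, …, n) are linearly independent over ℂ. -/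
open Complex

/-- The characters `w ↦ exp (l j * w)` as monoid homs from `Multiplicative ℂ`. -/
noncomputable def expChar (c : ℝ) : Multiplicative ℂ →* ℂ where
  toFun w := Complex.exp ((c : ℂ) * Multiplicative.toAdd w)
  map_one' := by simp
  map_mul' x y := by
    simp [mul_add, Complex.exp_add]

lemma expChar_injective : Function.Injective expChar := by
  intro a b hab
  have h := DFunLike.congr_fun hab (Multiplicative.ofAdd (1 : ℂ))
  simp only [expChar, MonoidHom.coe_mk, OneHom.coe_mk, toAdd_ofAdd, mul_one] at h
  have : Real.exp a = Real.exp b := by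
    have := h
    rw [← Complex.ofReal_exp, ← Complex.ofReal_exp] at this
    exact_mod_cast this
  exact Real.exp_injective this

lemma linearIndependent_exp_mul (m : ℕ) (l : Fin m → ℝ) (hl : Function.Injective l) :
    LinearIndependent ℂ (fun j : Fin m => fun w : ℂ => Complex.exp ((l j : ℂ) * w)) :=
  (linearIndependent_monoidHom (Multiplicative ℂ) ℂ).comp (fun j => expChar (l j))
    (expChar_injective.comp hl)

/-- For `g` entire and nonconstant and pairwise distinct real `λ_0, …, λ_n`,
the functions `z ↦ exp(λ_j g(z))` are linearly independent over `ℂ`. -/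
theorem linearIndependent_exp_lambda_g (n : ℕ) (g : ℂ → ℂ) (hg : Differentiable ℂ g)
    (hgc : ∃ z w : ℂ, g z ≠ g w) (l : Fin (n + 1) → ℝ) (hl : Function.Injective l) :
    LinearIndependent ℂ
      (fun j : Fin (n + 1) => fun z : ℂ => Complex.exp ((l j : ℂ) * g z)) := by
  rw [Fintype.linearIndependent_iff]
  intro c hc j
  -- the entire function F
  set F : ℂ → ℂ := fun w => ∑ i, c i * Complex.exp ((l i : ℂ) * w) with hF
  have hFz : ∀ z : ℂ, F (g z) = 0 := by
    intro z
    have := congrFun hc z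
    simpa [hF, Finset.sum_apply] using this
  have hFd : Differentiable ℂ F := by
    apply Differentiable.fun_sum
    intro i _
    exact (differentiable_const _).mul ((differentiable_const _).mul differentiable_id).cexp
  -- g is nonconstant, so by the open mapping theorem g '' univ is open
  have hgan : AnalyticOnNhd ℂ g Set.univ := fun z _ => hg.analyticAt z
  rcases hgan.is_constant_or_isOpen isPreconnected_univ with h | h
  · obtain ⟨w, hw⟩ := h
    obtain ⟨z1, z2, hz⟩ := hgc
    exact absurd ((hw z1 trivial).trans (hw z2 trivial).symm) hz
  · have hopen : IsOpen (g '' Set.univ) := h Set.univ le_rfl isOpen_univ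
    obtain ⟨z0, _, _⟩ : ∃ z0 : ℂ, True ∧ True := ⟨0, trivial, trivial⟩
    have hmem : g 0 ∈ g '' Set.univ := ⟨0, trivial, rfl⟩
    -- F vanishes on a neighborhood of g 0
    have hev : F =ᶠ[nhds (g 0)] 0 := by
      filter_upwards [hopen.mem_nhds hmem] with w hw
      obtain ⟨z, _, rfl⟩ := hw
      exact hFz z
    have hFan : AnalyticOnNhd ℂ F Set.univ := fun z _ => hFd.analyticAt z
    have hF0 : ∀ w : ℂ, F w = 0 :=
      fun w => hFan.eqOn_zero_of_preconnected_of_eventuallyEq_zero isPreconnected_univ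
        (Set.mem_univ (g 0)) hev (Set.mem_univ w)
    -- conclude via linear independence of exponentials
    have hli := linearIndependent_exp_mul (n + 1) l hl
    rw [Fintype.linearIndependent_iff] at hli
    apply hli c _ j
    funext w
    simpa [Finset.sum_apply] using hF0 w
end

section
/- Let n be a natural number, let a_0, …, a_n be real numbers, and let x > 0. Then the Wronskian at x (with derivatives taken within the interval (0, ∞)) of the n+1 functions (0, ∞) → ℝ given by t ↦ t^{a_j} (j = 0, …, n, real powers) equals (∏_{0 ≤ i < j ≤ n} (a_j − a_i)) · x^{a_0 + ⋯ + a_n − n(n+1)/2}. -/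
open Real Finset

lemma iteratedDerivWithin_rpow_aux (b : ℝ) (i : ℕ) :
    ∀ x ∈ Set.Ioi (0 : ℝ),
      iteratedDerivWithin i (fun t : ℝ => t ^ b) (Set.Ioi (0 : ℝ)) x =
        (∏ k ∈ Finset.range i, (b - k)) * x ^ (b - i) := by
  induction i with
  | zero =>
    intro x hx
    simp
  | succ i ih =>
    intro x hx
    have hUD : UniqueDiffWithinAt ℝ (Set.Ioi (0 : ℝ)) x := isOpen_Ioi.uniqueDiffWithinAt hx
    rw [iteratedDerivWithin_succ]
    have hEq : Set.EqOn (iteratedDerivWithin i (fun t : ℝ => t ^ b) (Set.Ioi (0 : ℝ)))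
        (fun t : ℝ => (∏ k ∈ Finset.range i, (b - k)) * t ^ (b - i)) (Set.Ioi (0 : ℝ)) := ih
    rw [derivWithin_congr hEq (ih x hx), derivWithin_of_isOpen isOpen_Ioi hx]
    have hx0 : x ≠ 0 := ne_of_gt hx
    have hd : HasDerivAt (fun t : ℝ => t ^ (b - i)) ((b - i) * x ^ (b - i - 1)) x :=
      Real.hasDerivAt_rpow_const (Or.inl hx0)
    rw [deriv_const_mul _ hd.differentiableAt, hd.deriv]
    rw [Finset.prod_range_succ]
    have : b - i - 1 = b - (i + 1 : ℕ) := by push_cast; ring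
    rw [this]
    ring

/-- The Wronskian at `x > 0` (derivatives within `(0,∞)`) of the real power functions
`t ↦ t^{a_j}` equals `(∏_{i<j} (a_j − a_i)) · x^{a_0+⋯+a_n − n(n+1)/2}`. -/
theorem wronskian_rpow (n : ℕ) (a : Fin (n + 1) → ℝ) (x : ℝ) (hx : 0 < x) :
    Matrix.det (Matrix.of fun i j : Fin (n + 1) =>
        iteratedDerivWithin (i : ℕ) (fun t : ℝ => t ^ a j) (Set.Ioi (0 : ℝ)) x) =
    (∏ i : Fin (n + 1), ∏ j ∈ Finset.Ioi i, (a j - a i)) *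
      x ^ ((∑ j, a j) - (n * (n + 1) : ℝ) / 2) := by
  have hx0 : x ≠ 0 := ne_of_gt hx
  have hent : ∀ i j : Fin (n + 1),
      iteratedDerivWithin (i : ℕ) (fun t : ℝ => t ^ a j) (Set.Ioi (0 : ℝ)) x =
        ((x ^ (-(i : ℝ))) * (x ^ (a j))) * (∏ k ∈ Finset.range (i : ℕ), (a j - k)) := by
    intro i j
    rw [iteratedDerivWithin_rpow_aux (a j) i x hx]
    rw [Real.rpow_sub hx, Real.rpow_neg hx.le, Real.rpow_natCast]
    ring
  -- rewrite the matrix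
  have : (Matrix.of fun i j : Fin (n + 1) =>
        iteratedDerivWithin (i : ℕ) (fun t : ℝ => t ^ a j) (Set.Ioi (0 : ℝ)) x) =
      Matrix.of fun i j : Fin (n + 1) =>
        ((x ^ (-(i : ℝ))) * (x ^ (a j))) * (∏ k ∈ Finset.range (i : ℕ), (a j - k)) := by
    ext i j; exact hent i j
  rw [this]
  -- set up the polynomials
  set p : Fin (n + 1) → Polynomial ℝ :=
    fun i => ∏ k ∈ Finset.range (i : ℕ), (Polynomial.X - Polynomial.C (k : ℝ)) with hp
  have hdeg : ∀ i : Fin (n + 1), (p i).natDegree = (i : ℕ) := by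
    intro i
    rw [hp]
    rw [Polynomial.natDegree_prod _ _ (fun k _ => Polynomial.X_sub_C_ne_zero _)]
    have hone : ∀ k ∈ Finset.range (i : ℕ),
        (Polynomial.X - Polynomial.C ((k : ℝ))).natDegree = 1 :=
      fun k _ => Polynomial.natDegree_X_sub_C _
    rw [Finset.sum_congr rfl hone]
    simp
  have hmonic : ∀ i : Fin (n + 1), (p i).Monic := fun i =>
    Polynomial.monic_prod_of_monic _ _ (fun k _ => Polynomial.monic_X_sub_C _)
  have heval : ∀ (i j : Fin (n + 1)),
      (p i).eval (a j) = ∏ k ∈ Finset.range (i : ℕ), (a j - k) := by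
    intro i j; simp [hp, Polynomial.eval_prod]
  -- factor the determinant
  have key : (Matrix.of fun i j : Fin (n + 1) =>
        ((x ^ (-(i : ℝ))) * (x ^ (a j))) * (∏ k ∈ Finset.range (i : ℕ), (a j - k))).det =
      (∏ i : Fin (n + 1), x ^ (-(i : ℝ))) * (∏ j : Fin (n + 1), x ^ (a j)) *
        (Matrix.of fun i j : Fin (n + 1) => (p j).eval (a i)).det := by
    have h1 : (Matrix.of fun i j : Fin (n + 1) =>
          ((x ^ (-(i : ℝ))) * (x ^ (a j))) * (∏ k ∈ Finset.range (i : ℕ), (a j - k))) =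
        Matrix.of fun i j : Fin (n + 1) =>
          (x ^ (-(i : ℝ))) * ((x ^ (a j)) * ((p i).eval (a j))) := by
      ext i j; simp only [Matrix.of_apply, heval]; ring
    rw [h1]
    rw [show (Matrix.of fun i j : Fin (n + 1) =>
          (x ^ (-(i : ℝ))) * ((x ^ (a j)) * ((p i).eval (a j)))) =
        Matrix.of fun i j : Fin (n + 1) =>
          (fun i : Fin (n+1) => x ^ (-(i : ℝ))) i *
            ((fun i j : Fin (n+1) => (x ^ (a j)) * ((p i).eval (a j))) i j) from rfl]
    rw [Matrix.det_mul_column (fun i : Fin (n+1) => x ^ (-(i : ℝ)))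
      (fun i j : Fin (n+1) => (x ^ (a j)) * ((p i).eval (a j)))]
    rw [show (Matrix.det fun i j : Fin (n + 1) => x ^ (a j) * ((p i).eval (a j))) =
        Matrix.det (Matrix.of fun i j : Fin (n + 1) =>
          (fun j : Fin (n + 1) => x ^ (a j)) j *
            ((fun i j : Fin (n + 1) => (p i).eval (a j)) i j)) from rfl]
    rw [Matrix.det_mul_row (fun j : Fin (n + 1) => x ^ (a j))
      (fun i j : Fin (n + 1) => (p i).eval (a j))]
    rw [← mul_assoc]
    congr 1
    rw [← Matrix.det_transpose (Matrix.of fun i j : Fin (n + 1) => (p j).eval (a i))]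
    rfl
  rw [key]
  rw [← Matrix.det_eval_matrixOfPolynomials_eq_det_vandermonde a p hdeg hmonic,
    Matrix.det_vandermonde]
  have hgauss : ((∑ i ∈ Finset.range (n + 1), i : ℕ) : ℝ) * 2 = (n + 1) * n := by
    exact_mod_cast congrArg (Nat.cast : ℕ → ℝ) (Finset.sum_range_id_mul_two (n + 1))
  have hprodneg : (∏ i : Fin (n + 1), x ^ (-(i : ℝ))) = x ^ (-((n * (n + 1) : ℝ) / 2)) := by
    rw [← Real.rpow_sum_of_pos hx]
    congr 1
    rw [Fin.sum_univ_eq_sum_range (fun i => -(i : ℝ)), Finset.sum_neg_distrib,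
      ← Nat.cast_sum]
    linarith
  have hproda : (∏ j : Fin (n + 1), x ^ (a j)) = x ^ (∑ j, a j) :=
    (Real.rpow_sum_of_pos hx a Finset.univ).symm
  rw [hprodneg, hproda, ← Real.rpow_add hx]
  rw [show -((n * (n + 1) : ℝ) / 2) + ∑ j, a j = (∑ j, a j) - (n * (n + 1) : ℝ) / 2 by ring]
  ring
end

section
/- Let n be a natural number, let β_0 < β_1 < ⋯ < β_n be real numbers, and let φ_0, …, φ_n be polynomials with complex coefficients such that the n+1 functions (0, ∞) → ℂ given by x ↦ x^{β_j} · φ_j(x) are linearly independent over ℂ. Then there exist an invertible (n+1)×(n+1) complex matrix T and nonzero polynomials ψ_0, …, ψ_n with complex coefficients such that: (i) for every i and every x > 0, x^{β_i} · ψ_i(x) = Σ_{j=0}^{n} T_{ij} · x^{β_j} · φ_j(x); and (ii) the n+1 real numbers β_0 + deg ψ_0, β_1 + deg ψ_1, …, β_n + deg ψ_n are pairwise distinct. -/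
open Polynomial

lemma reduce_aux (S : Submodule ℂ (Polynomial ℂ)) (D : Set ℕ)
    (hD : ∀ d ∈ D, ∃ s ∈ S, s ≠ 0 ∧ s.natDegree = d) :
    ∀ N : ℕ, ∀ p ∉ S, p.natDegree < N → ∃ s ∈ S, (p + s).natDegree ∉ D := by
  intro N
  induction N with
  | zero => exact fun p _ h => absurd h (Nat.not_lt_zero _)
  | succ N ih =>
    intro p hp hlt
    by_cases hd : p.natDegree ∈ D
    · obtain ⟨s₀, hs₀S, hs₀0, hs₀d⟩ := hD _ hd
      have hp0 : p ≠ 0 := fun h => hp (h ▸ S.zero_mem)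
      set c := p.leadingCoeff / s₀.leadingCoeff with hc_def
      have hc : c ≠ 0 := div_ne_zero (leadingCoeff_ne_zero.2 hp0) (leadingCoeff_ne_zero.2 hs₀0)
      have hdegeq : p.degree = (c • s₀).degree := by
        rw [smul_eq_C_mul, degree_mul, degree_C hc, zero_add,
          degree_eq_natDegree hp0, degree_eq_natDegree hs₀0, hs₀d]
      have hlc : p.leadingCoeff = (c • s₀).leadingCoeff := by
        rw [smul_eq_C_mul, leadingCoeff_mul, leadingCoeff_C, hc_def,
          div_mul_cancel₀ _ (leadingCoeff_ne_zero.2 hs₀0)]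
      have h1 : (p - c • s₀).degree < p.degree := degree_sub_lt hdegeq hp0 hlc
      have hq : (p - c • s₀) ∉ S := fun h => hp (by
        have := S.add_mem h (S.smul_mem c hs₀S); simpa using this)
      have hq0 : (p - c • s₀) ≠ 0 := fun h => hq (h ▸ S.zero_mem)
      have h2 : (p - c • s₀).natDegree < p.natDegree := natDegree_lt_natDegree hq0 h1
      obtain ⟨s, hsS, hsd⟩ := ih _ hq (by omega)
      refine ⟨s - c • s₀, S.sub_mem hsS (S.smul_mem _ hs₀S), ?_⟩
      rwa [show p + (s - c • s₀) = p - c • s₀ + s by ring]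
    · exact ⟨0, S.zero_mem, by simpa using hd⟩

lemma reduce (S : Submodule ℂ (Polynomial ℂ)) (D : Set ℕ)
    (hD : ∀ d ∈ D, ∃ s ∈ S, s ≠ 0 ∧ s.natDegree = d)
    (p : Polynomial ℂ) (hp : p ∉ S) : ∃ s ∈ S, (p + s).natDegree ∉ D :=
  reduce_aux S D hD (p.natDegree + 1) p hp (Nat.lt_succ_self _)

/-- Distinct quasi-degrees after a linear change: given `β_0 < ⋯ < β_n` and polynomials
`φ_j` with `x ↦ x^{β_j} φ_j(x)` linearly independent on `(0,∞)`, there is an invertible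
matrix `T` and nonzero polynomials `ψ_i` with `x^{β_i} ψ_i(x) = Σ_j T_{ij} x^{β_j} φ_j(x)`
and pairwise distinct quasi-degrees `β_i + deg ψ_i`. -/
theorem exists_unitary_change_distinct_quasidegrees (n : ℕ) (β : Fin (n + 1) → ℝ)
    (hβ : StrictMono β) (φ : Fin (n + 1) → Polynomial ℂ)
    (hli : LinearIndependent ℂ (fun j : Fin (n + 1) => fun x : Set.Ioi (0 : ℝ) =>
      ((((x : ℝ) ^ β j : ℝ)) : ℂ) * (φ j).eval ((x : ℝ) : ℂ))) :
    ∃ (T : Matrix (Fin (n + 1)) (Fin (n + 1)) ℂ) (ψ : Fin (n + 1) → Polynomial ℂ),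
      IsUnit T ∧ (∀ i, ψ i ≠ 0) ∧
      (∀ i : Fin (n + 1), ∀ x : ℝ, 0 < x →
        ((x ^ β i : ℝ) : ℂ) * (ψ i).eval (x : ℂ) =
          ∑ j, T i j * (((x ^ β j : ℝ) : ℂ) * (φ j).eval (x : ℂ))) ∧
      Function.Injective (fun i => β i + ((ψ i).natDegree : ℝ)) := by
  classical
  induction n with
  | zero =>
    haveI : Subsingleton (Fin (0 + 1)) := ⟨fun a b => Fin.ext (by omega)⟩
    refine ⟨1, φ, isUnit_one, ?_, ?_, ?_⟩
    · intro i h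
      apply hli.ne_zero i
      funext x
      simp [h]
    · intro i x hx
      rw [Fin.sum_univ_one, Subsingleton.elim i 0]
      simp [Matrix.one_apply]
    · intro a b _
      exact Subsingleton.elim a b
  | succ n ih =>
    obtain ⟨T', ψ', hT', hψ'0, hEq', hinj'⟩ :=
      ih (fun j => β j.succ) (hβ.comp Fin.strictMono_succ) (fun j => φ j.succ)
        (hli.comp Fin.succ (Fin.succ_injective _))
    have hEq2 : ∀ i : Fin (n + 1), ∀ x : ℝ, 0 < x →
        ((x ^ β i.succ : ℝ) : ℂ) * (ψ' i).eval (x : ℂ) =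
          ∑ k, T' i k * (((x ^ β k.succ : ℝ) : ℂ) * (φ k.succ).eval (x : ℂ)) := hEq'
    have hinj2 : Function.Injective
        (fun i : Fin (n + 1) => β i.succ + (((ψ' i).natDegree : ℝ))) := hinj'
    -- the generators
    obtain ⟨g, hg_def⟩ : ∃ g : Fin (n + 1) → Polynomial ℂ, g = fun j =>
        if h : ∃ m : ℕ, β j.succ = β 0 + m then X ^ h.choose * ψ' j else 0 := ⟨_, rfl⟩
    obtain ⟨S, hS_def⟩ : ∃ S : Submodule ℂ (Polynomial ℂ),
        S = Submodule.span ℂ (Set.range g) := ⟨_, rfl⟩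
    obtain ⟨D, hD_def⟩ : ∃ D : Set ℕ,
        D = {d : ℕ | ∃ j : Fin (n + 1), β j.succ + (((ψ' j).natDegree : ℝ)) = β 0 + d} :=
      ⟨_, rfl⟩
    have hgmem : ∀ j, g j ∈ S := fun j => hS_def ▸ Submodule.subset_span ⟨j, rfl⟩
    -- each degree in D is realized by a nonzero element of S
    have hD : ∀ d ∈ D, ∃ s ∈ S, s ≠ 0 ∧ s.natDegree = d := by
      intro d hd
      rw [hD_def] at hd
      obtain ⟨j, hj⟩ := hd
      have hpos : β 0 < β j.succ := hβ j.succ_pos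
      have hmlt : (ψ' j).natDegree < d := by
        have : ((ψ' j).natDegree : ℝ) < d := by linarith
        exact_mod_cast this
      have hm : β j.succ = β 0 + ((d - (ψ' j).natDegree : ℕ) : ℝ) := by
        push_cast [Nat.cast_sub hmlt.le]
        linarith
      have hex : ∃ m : ℕ, β j.succ = β 0 + m := ⟨_, hm⟩
      have hch : hex.choose = d - (ψ' j).natDegree := by
        have h1 := hex.choose_spec
        have h2 : (hex.choose : ℝ) = ((d - (ψ' j).natDegree : ℕ) : ℝ) := by linarith [hm]
        exact_mod_cast h2
      have hgj : g j = X ^ (d - (ψ' j).natDegree) * ψ' j := by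
        rw [hg_def]
        simp only
        rw [dif_pos hex, hch]
      refine ⟨g j, hgmem j, ?_, ?_⟩
      · rw [hgj]; exact mul_ne_zero (pow_ne_zero _ X_ne_zero) (hψ'0 j)
      · rw [hgj, natDegree_mul (pow_ne_zero _ X_ne_zero) (hψ'0 j), natDegree_X_pow]
        omega
    -- the key pointwise identity for class members
    have hg : ∀ (j : Fin (n + 1)), (∃ m : ℕ, β j.succ = β 0 + m) → ∀ x : ℝ, 0 < x →
        ((x ^ β (0 : Fin (n + 1 + 1)) : ℝ) : ℂ) * (g j).eval (x : ℂ)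
          = ((x ^ β j.succ : ℝ) : ℂ) * (ψ' j).eval (x : ℂ) := by
      intro j hex x hx
      obtain ⟨m, hm⟩ := hex
      have hch : (⟨m, hm⟩ : ∃ m : ℕ, β j.succ = β 0 + m).choose = m := by
        have h1 := (⟨m, hm⟩ : ∃ m : ℕ, β j.succ = β 0 + m).choose_spec
        have h2 : ((⟨m, hm⟩ : ∃ m : ℕ, β j.succ = β 0 + m).choose : ℝ) = m := by linarith
        exact_mod_cast h2
      have hgj : g j = X ^ m * ψ' j := by
        rw [hg_def]; simp only; rw [dif_pos ⟨m, hm⟩, hch]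
      rw [hgj, hm]
      have hr : x ^ (β 0 + (m : ℝ)) = x ^ β 0 * x ^ m := by
        rw [Real.rpow_add hx, Real.rpow_natCast]
      rw [hr]
      push_cast
      simp [eval_pow]
      ring
    -- the evaluated generator identity in general form
    have e1 : ∀ (cc : Fin (n + 1) → ℂ) (j : Fin (n + 1)) (x : ℝ), 0 < x →
        ((x ^ β (0 : Fin (n + 1 + 1)) : ℝ) : ℂ) * (cc j • g j).eval (x : ℂ)
          = (if ∃ m : ℕ, β j.succ = β 0 + m then cc j else 0) *
            (((x ^ β j.succ : ℝ) : ℂ) * (ψ' j).eval (x : ℂ)) := by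
      intro cc j x hx
      by_cases h : ∃ m : ℕ, β j.succ = β 0 + m
      · rw [if_pos h, ← hg j h x hx, eval_smul]
        simp only [smul_eq_mul]
        ring
      · rw [if_neg h]
        have hgj : g j = 0 := by rw [hg_def]; simp only; rw [dif_neg h]
        simp [hgj]
    -- the sum-swapping identity
    have swap : ∀ (dd v : Fin (n + 1) → ℂ),
        ∑ j, dd j * ∑ k, T' j k * v k = ∑ k, (∑ j, dd j * T' j k) * v k := by
      intro dd v
      simp_rw [Finset.mul_sum, Finset.sum_mul, mul_assoc]
      exact Finset.sum_comm
    -- φ 0 is not in the span of the generators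
    have hp : φ 0 ∉ S := by
      intro hmem
      rw [hS_def, Submodule.mem_span_range_iff_exists_fun] at hmem
      obtain ⟨c, hc⟩ := hmem
      have h0 := Fintype.linearIndependent_iff.mp hli
        (Fin.cases (-1) (fun k => ∑ j,
          (if ∃ m : ℕ, β j.succ = β 0 + m then c j else 0) * T' j k)) ?_ 0
      · simpa using h0
      · funext x
        have hx : (0 : ℝ) < (x : ℝ) := x.2
        simp only [Finset.sum_apply, Pi.smul_apply, smul_eq_mul, Pi.zero_apply]
        rw [Fin.sum_univ_succ]
        simp only [Fin.cases_zero, Fin.cases_succ]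
        have main : ∑ k : Fin (n + 1), (∑ j,
              (if ∃ m : ℕ, β j.succ = β 0 + m then c j else 0) * T' j k) *
              ((((x : ℝ) ^ β k.succ : ℝ) : ℂ) * (φ k.succ).eval ((x : ℝ) : ℂ))
            = (((x : ℝ) ^ β (0 : Fin (n + 1 + 1)) : ℝ) : ℂ) * (φ 0).eval ((x : ℝ) : ℂ) := by
          rw [← swap]
          calc ∑ j, (if ∃ m : ℕ, β j.succ = β 0 + m then c j else 0) *
                ∑ k, T' j k * ((((x : ℝ) ^ β k.succ : ℝ) : ℂ) * (φ k.succ).eval ((x : ℝ) : ℂ))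
              = ∑ j, (if ∃ m : ℕ, β j.succ = β 0 + m then c j else 0) *
                ((((x : ℝ) ^ β j.succ : ℝ) : ℂ) * (ψ' j).eval ((x : ℝ) : ℂ)) := by
                refine Finset.sum_congr rfl fun j _ => ?_
                rw [← hEq2 j (x : ℝ) hx]
            _ = ∑ j, (((x : ℝ) ^ β (0 : Fin (n + 1 + 1)) : ℝ) : ℂ) *
                (c j • g j).eval ((x : ℝ) : ℂ) := by
                refine Finset.sum_congr rfl fun j _ => ?_
                rw [e1 c j (x : ℝ) hx]
            _ = (((x : ℝ) ^ β (0 : Fin (n + 1 + 1)) : ℝ) : ℂ) * (φ 0).eval ((x : ℝ) : ℂ) := by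
                rw [← Finset.mul_sum, ← eval_finset_sum, hc]
        rw [main]
        ring
    -- reduce the degree of φ 0 out of D
    obtain ⟨s, hsS, hsD⟩ := reduce S D hD (φ 0) hp
    have hsS' := hsS
    rw [hS_def, Submodule.mem_span_range_iff_exists_fun] at hsS'
    obtain ⟨c, hc⟩ := hsS'
    obtain ⟨d, hd_def⟩ : ∃ d : Fin (n + 1) → ℂ,
        d = fun j => if ∃ m : ℕ, β j.succ = β 0 + m then c j else 0 := ⟨_, rfl⟩
    -- the new data
    obtain ⟨T, hT_def⟩ : ∃ T : Matrix (Fin (n + 1 + 1)) (Fin (n + 1 + 1)) ℂ,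
        T = Matrix.of (Fin.cases (Fin.cases 1 fun k => ∑ j, d j * T' j k)
          (fun i' => Fin.cases 0 fun k => T' i' k)) := ⟨_, rfl⟩
    obtain ⟨ψ, hψ_def⟩ : ∃ ψ : Fin (n + 1 + 1) → Polynomial ℂ,
        ψ = Fin.cases (φ 0 + s) ψ' := ⟨_, rfl⟩
    have hT00 : T 0 0 = 1 := by rw [hT_def]; simp
    have hT0s : ∀ k : Fin (n + 1), T 0 k.succ = ∑ j, d j * T' j k := by
      intro k; rw [hT_def]; simp
    have hTs0 : ∀ i : Fin (n + 1), T i.succ 0 = 0 := by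
      intro i; rw [hT_def]; simp
    have hTss : ∀ i k : Fin (n + 1), T i.succ k.succ = T' i k := by
      intro i k; rw [hT_def]; simp
    have hψ0 : ψ 0 = φ 0 + s := by rw [hψ_def]; simp
    have hψs : ∀ i : Fin (n + 1), ψ i.succ = ψ' i := by intro i; rw [hψ_def]; simp
    have hψ0ne : ψ 0 ≠ 0 := by
      rw [hψ0]
      intro h
      apply hp
      have : φ 0 = -s := eq_neg_of_add_eq_zero_left h
      rw [this]
      exact S.neg_mem hsS
    refine ⟨T, ψ, ?_, ?_, ?_, ?_⟩
    · -- IsUnit T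
      have hsub : T.submatrix (Fin.succAbove 0) Fin.succ = T' := by
        ext i k
        rw [Matrix.submatrix_apply, Fin.succAbove_zero]
        exact hTss i k
      have hdet : T.det = T'.det := by
        rw [Matrix.det_succ_column_zero, Fin.sum_univ_succ, hsub, hT00]
        simp [hTs0]
      rw [Matrix.isUnit_iff_isUnit_det, hdet, ← Matrix.isUnit_iff_isUnit_det]
      exact hT'
    · -- nonzero
      intro i
      induction i using Fin.cases with
      | zero => exact hψ0ne
      | succ i' => rw [hψs]; exact hψ'0 i'
    · -- the equations
      intro i x hx
      induction i using Fin.cases with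
      | zero =>
        have hd_apply : ∀ j : Fin (n + 1),
            d j = if ∃ m : ℕ, β j.succ = β 0 + m then c j else 0 := fun j => by rw [hd_def]
        rw [Fin.sum_univ_succ, hT00, one_mul, hψ0, ← hc, eval_add, mul_add]
        congr 1
        rw [eval_finset_sum, Finset.mul_sum]
        calc ∑ j : Fin (n + 1), ((x ^ β (0 : Fin (n + 1 + 1)) : ℝ) : ℂ) * (c j • g j).eval (x : ℂ)
            = ∑ j : Fin (n + 1), d j * (((x ^ β j.succ : ℝ) : ℂ) * (ψ' j).eval (x : ℂ)) := by
              refine Finset.sum_congr rfl fun j _ => ?_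
              rw [e1 c j x hx, ← hd_apply j]
          _ = ∑ j : Fin (n + 1), d j * ∑ k : Fin (n + 1), T' j k *
                (((x ^ β k.succ : ℝ) : ℂ) * (φ k.succ).eval (x : ℂ)) := by
              refine Finset.sum_congr rfl fun j _ => ?_
              rw [hEq2 j x hx]
          _ = ∑ k : Fin (n + 1), (∑ j : Fin (n + 1), d j * T' j k) *
                (((x ^ β k.succ : ℝ) : ℂ) * (φ k.succ).eval (x : ℂ)) := swap d _
          _ = ∑ k : Fin (n + 1), T 0 k.succ *
                (((x ^ β k.succ : ℝ) : ℂ) * (φ k.succ).eval (x : ℂ)) := by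
              refine Finset.sum_congr rfl fun k _ => ?_
              rw [hT0s k]
      | succ i' =>
        rw [hψs, Fin.sum_univ_succ, hTs0, zero_mul, zero_add, hEq2 i' x hx]
        exact Finset.sum_congr rfl fun k _ => by rw [hTss]
    · -- injectivity
      intro a b hab
      induction a using Fin.cases with
      | zero =>
        induction b using Fin.cases with
        | zero => rfl
        | succ j =>
          exfalso
          apply hsD
          rw [hD_def]
          simp only [hψ0, hψs] at hab
          exact ⟨j, by linarith⟩
      | succ i =>
        induction b using Fin.cases with
        | zero =>
          exfalso
          apply hsD
          rw [hD_def]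
          simp only [hψ0, hψs] at hab
          exact ⟨i, by linarith⟩
        | succ j =>
          simp only [hψs] at hab
          exact congrArg Fin.succ (hinj2 hab)
end

section
/- Let n be a natural number, let β_0, …, β_n be real numbers, and let φ_0, …, φ_n be nonzero polynomials with complex coefficients such that the n+1 real numbers μ_j := β_j + deg φ_j (j = 0, …, n) are pairwise distinct. Let W(x) denote the Wronskian at x (with derivatives taken within (0, ∞)) of the n+1 functions (0, ∞) → ℂ given by t ↦ t^{β_j} · φ_j(t). Then, as x → ∞, the ratio W(x) / x^{μ_0 + ⋯ + μ_n − n(n+1)/2} tends to (∏_{0 ≤ i < j ≤ n} (μ_j − μ_i)) · ∏_{j=0}^{n} lc(φ_j), where lc denotes the leading coefficient. -/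
open Polynomial Filter Set

noncomputable def wrQ (β : ℝ) (φ : Polynomial ℂ) : ℕ → Polynomial ℂ
  | 0 => φ
  | (i+1) => Polynomial.C ((β - i : ℝ) : ℂ) * wrQ β φ i + Polynomial.X * (wrQ β φ i).derivative

lemma wrQ_natDegree_le (β : ℝ) (φ : Polynomial ℂ) (i : ℕ) :
    (wrQ β φ i).natDegree ≤ φ.natDegree := by
  induction i with
  | zero => exact le_rfl
  | succ i ih =>
    refine (Polynomial.natDegree_add_le _ _).trans (max_le ((natDegree_C_mul_le _ _).trans ih) ?_)
    rcases Nat.eq_zero_or_pos (wrQ β φ i).natDegree with h | h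
    · rcases Polynomial.natDegree_eq_zero.1 h with ⟨a, ha⟩
      simp [← ha]
    · refine (Polynomial.natDegree_mul_le).trans ?_
      have := Polynomial.natDegree_derivative_lt (p := wrQ β φ i) (Nat.pos_iff_ne_zero.mp h)
      have : (wrQ β φ i).derivative.natDegree + 1 ≤ (wrQ β φ i).natDegree := this
      simpa [Polynomial.natDegree_X, add_comm] using this.trans ih

lemma wrQ_coeff (β : ℝ) (φ : Polynomial ℂ) (d : ℕ) (i : ℕ) :
    (wrQ β φ i).coeff d = (∏ k ∈ Finset.range i, (((β + d - k : ℝ)) : ℂ)) * φ.coeff d := by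
  induction i with
  | zero => simp [wrQ]
  | succ i ih =>
    have hX : (Polynomial.X * (wrQ β φ i).derivative).coeff d
        = (d : ℂ) * (wrQ β φ i).coeff d := by
      cases d with
      | zero => simp [Polynomial.mul_coeff_zero]
      | succ m =>
        rw [Polynomial.coeff_X_mul, Polynomial.coeff_derivative]
        push_cast; ring
    rw [wrQ]
    rw [Polynomial.coeff_add, Polynomial.coeff_C_mul, hX, Finset.prod_range_succ, ih]
    push_cast; ring

lemma wrQ_iteratedDerivWithin (β : ℝ) (φ : Polynomial ℂ) (i : ℕ) :
    ∀ x ∈ Set.Ioi (0:ℝ),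
      iteratedDerivWithin i (fun t : ℝ => ((t ^ β : ℝ) : ℂ) * φ.eval (t : ℂ)) (Set.Ioi 0) x
        = ((x ^ (β - i) : ℝ) : ℂ) * (wrQ β φ i).eval (x:ℂ) := by
  induction i with
  | zero => intro x hx; simp [wrQ]
  | succ i ih =>
    intro x hx
    rw [iteratedDerivWithin_succ]
    rw [derivWithin_congr ih (ih x hx)]
    rw [derivWithin_of_isOpen isOpen_Ioi hx]
    have hx0 : (0:ℝ) < x := hx
    have h1 : HasDerivAt (fun t : ℝ => ((t ^ (β - i) : ℝ) : ℂ))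
        (((β - i) * x ^ (β - i - 1) : ℝ) : ℂ) x :=
      (Real.hasDerivAt_rpow_const (Or.inl hx0.ne')).ofReal_comp
    have h2 : HasDerivAt (fun t : ℝ => (wrQ β φ i).eval (t:ℂ))
        ((wrQ β φ i).derivative.eval (x:ℂ)) x :=
      ((wrQ β φ i).hasDerivAt (x:ℂ)).comp_ofReal
    have h : deriv (fun t : ℝ => ((t ^ (β - i) : ℝ) : ℂ) * (wrQ β φ i).eval (t:ℂ)) x = _ :=
      (h1.mul h2).deriv
    rw [h]
    have hxx : (x ^ (β - i) : ℝ) = x ^ (β - i - 1) * x := by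
      rw [← Real.rpow_add_one hx0.ne']; ring_nf
    rw [wrQ]
    simp only [Polynomial.eval_add, Polynomial.eval_mul, Polynomial.eval_C, Polynomial.eval_X]
    push_cast [hxx]
    ring

lemma wr_poly_div_pow_tendsto (Q : Polynomial ℂ) (d : ℕ) (hd : Q.natDegree ≤ d) :
    Filter.Tendsto (fun x : ℝ => Q.eval (x:ℂ) / (x:ℂ) ^ d) Filter.atTop
      (nhds (Q.coeff d)) := by
  have key : ∀ x : ℝ, 0 < x → Q.eval (x:ℂ) / (x:ℂ) ^ d
      = ∑ k ∈ Finset.range (d+1), Q.coeff k * ((x ^ ((k:ℤ) - d) : ℝ) : ℂ) := by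
    intro x hx
    have hx0 : (x:ℂ) ≠ 0 := by exact_mod_cast hx.ne'
    rw [Polynomial.eval_eq_sum_range' (Nat.lt_succ_of_le hd), Finset.sum_div]
    refine Finset.sum_congr rfl fun k hk => ?_
    rw [mul_div_assoc]
    congr 1
    rw [Complex.ofReal_zpow, div_eq_iff (pow_ne_zero _ hx0), ← zpow_natCast (x:ℂ) k,
      ← zpow_natCast (x:ℂ) d, ← zpow_add₀ hx0]
    congr 1; ring
  have hsum : Filter.Tendsto
      (fun x : ℝ => ∑ k ∈ Finset.range (d+1), Q.coeff k * ((x ^ ((k:ℤ) - d) : ℝ) : ℂ))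
      Filter.atTop (nhds (∑ k ∈ Finset.range (d+1),
        if k = d then Q.coeff d else 0)) := by
    refine tendsto_finset_sum _ fun k hk => ?_
    rcases eq_or_ne k d with rfl | hkd
    · simp only [sub_self, if_pos rfl]
      simpa using tendsto_const_nhds.congr' (by
        filter_upwards [Filter.eventually_gt_atTop (0:ℝ)] with x hx
        simp)
    · rw [if_neg hkd]
      have hneg : (k:ℤ) - d < 0 := by
        have : k < d := lt_of_le_of_ne (Nat.lt_succ_iff.mp (Finset.mem_range.mp hk)) hkd
        omega
      have h0 : Filter.Tendsto (fun x : ℝ => x ^ ((k:ℤ) - d)) Filter.atTop (nhds 0) :=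
        tendsto_zpow_atTop_zero hneg
      have := (Complex.continuous_ofReal.tendsto 0).comp h0
      simpa using this.const_mul (Q.coeff k)
  have : (∑ k ∈ Finset.range (d+1), if k = d then Q.coeff d else 0) = Q.coeff d := by
    simp [Finset.sum_ite_eq]
  rw [this] at hsum
  refine hsum.congr' ?_
  filter_upwards [Filter.eventually_gt_atTop (0:ℝ)] with x hx
  exact (key x hx).symm

/-- Asymptotics of the Wronskian of `t ↦ t^{β_j} φ_j(t)` at infinity: with
`μ_j = β_j + deg φ_j` pairwise distinct, `W(x)/x^{Σ μ_j − n(n+1)/2}` tends to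
`(∏_{i<j} (μ_j − μ_i)) · ∏_j lc(φ_j)` as `x → ∞`. -/
theorem wronskian_rpow_mul_poly_asymptotic (n : ℕ) (β : Fin (n + 1) → ℝ)
    (φ : Fin (n + 1) → Polynomial ℂ) (hφ : ∀ j, φ j ≠ 0)
    (μ : Fin (n + 1) → ℝ) (hμ : ∀ j, μ j = β j + ((φ j).natDegree : ℝ))
    (hinj : Function.Injective μ)
    (W : ℝ → ℂ)
    (hW : ∀ x : ℝ, W x = Matrix.det (Matrix.of fun i j : Fin (n + 1) =>
        iteratedDerivWithin (i : ℕ)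
          (fun t : ℝ => ((t ^ β j : ℝ) : ℂ) * (φ j).eval (t : ℂ)) (Set.Ioi (0 : ℝ)) x)) :
    Filter.Tendsto
      (fun x : ℝ => W x / ((x ^ ((∑ j, μ j) - (n * (n + 1) : ℝ) / 2) : ℝ) : ℂ))
      Filter.atTop
      (nhds ((∏ i : Fin (n + 1), ∏ j ∈ Finset.Ioi i, ((μ j - μ i : ℝ) : ℂ)) *
        ∏ j, (φ j).leadingCoeff)) := by
  classical
  set d : Fin (n+1) → ℕ := fun j => (φ j).natDegree with hd
  set b : ℝ → Matrix (Fin (n+1)) (Fin (n+1)) ℂ :=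
    fun x => Matrix.of fun i j => (wrQ (β j) (φ j) i).eval (x:ℂ) / (x:ℂ) ^ (d j) with hb
  set c : Matrix (Fin (n+1)) (Fin (n+1)) ℂ :=
    Matrix.of fun i j => (wrQ (β j) (φ j) i).coeff (d j) with hc
  -- Gauss sum
  have hS : (∑ i : Fin (n+1), (i:ℝ)) = (n * (n+1) : ℝ) / 2 := by
    have h2 : ((∑ i ∈ Finset.range (n+1), i) * 2) = (n+1) * n :=
      Finset.sum_range_id_mul_two (n+1)
    have : (∑ i : Fin (n+1), (i:ℝ)) = ((∑ i ∈ Finset.range (n+1), i : ℕ) : ℝ) := by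
      rw [Fin.sum_univ_eq_sum_range]; push_cast; rfl
    rw [this]
    have := congrArg (Nat.cast : ℕ → ℝ) h2
    push_cast at this ⊢
    linarith
  -- limit of det b
  have hbc : Filter.Tendsto b Filter.atTop (nhds c) := by
    refine tendsto_pi_nhds.2 fun i => tendsto_pi_nhds.2 fun j => ?_
    exact wr_poly_div_pow_tendsto _ _ (wrQ_natDegree_le _ _ _)
  have hdet : Filter.Tendsto (fun x => (b x).det) Filter.atTop (nhds c.det) :=
    ((continuous_id.matrix_det).tendsto c).comp hbc
  -- eventual equality
  have heq : (fun x : ℝ => W x / ((x ^ ((∑ j, μ j) - (n * (n + 1) : ℝ) / 2) : ℝ) : ℂ))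
      =ᶠ[Filter.atTop] fun x => (b x).det := by
    filter_upwards [Filter.eventually_gt_atTop (0:ℝ)] with x hx0
    have hxmem : x ∈ Set.Ioi (0:ℝ) := hx0
    have hxc : ∀ j, ((x:ℂ)) ^ (d j) = ((x ^ ((d j) : ℝ) : ℝ) : ℂ) := fun j => by
      rw [Real.rpow_natCast, Complex.ofReal_pow]
    have hentry : ∀ i j : Fin (n+1),
        iteratedDerivWithin (i:ℕ)
          (fun t : ℝ => ((t ^ β j : ℝ) : ℂ) * (φ j).eval (t : ℂ)) (Set.Ioi 0) x
        = ((x ^ μ j : ℝ) : ℂ) * (((x ^ (-(i:ℕ):ℝ) : ℝ) : ℂ) * b x i j) := by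
      intro i j
      rw [wrQ_iteratedDerivWithin (β j) (φ j) i x hxmem]
      have hr : (x ^ μ j : ℝ) * x ^ (-(i:ℕ):ℝ) = x ^ (β j - i) * x ^ ((d j : ℕ):ℝ) := by
        rw [← Real.rpow_add hx0, ← Real.rpow_add hx0, hμ j]
        congr 1; push_cast; ring
      have hd0 : ((x ^ ((d j) : ℝ) : ℝ) : ℂ) ≠ 0 :=
        Complex.ofReal_ne_zero.mpr (Real.rpow_pos_of_pos hx0 _).ne'
      have hd0' : ((x:ℂ)) ^ (d j) ≠ 0 :=
        pow_ne_zero _ (by exact_mod_cast hx0.ne')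
      have hcast : (((x ^ μ j : ℝ) : ℂ) * ((x ^ (-(i:ℕ):ℝ) : ℝ) : ℂ))
          = ((x ^ (β j - i) : ℝ) : ℂ) * ((x ^ ((d j) : ℝ) : ℝ) : ℂ) := by
        rw [← Complex.ofReal_mul, ← Complex.ofReal_mul, hr]
      simp only [hb, Matrix.of_apply, hxc j]
      field_simp
      linear_combination (-((wrQ (β j) (φ j) (i:ℕ)).eval (x:ℂ))) * hcast
    rw [hW x]
    have h1 : (Matrix.of fun i j : Fin (n+1) =>
        iteratedDerivWithin (i:ℕ)
          (fun t : ℝ => ((t ^ β j : ℝ) : ℂ) * (φ j).eval (t : ℂ)) (Set.Ioi 0) x)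
        = Matrix.of fun i j => ((x ^ μ j : ℝ) : ℂ) *
            (Matrix.of (fun i j : Fin (n+1) => ((x ^ (-(i:ℕ):ℝ) : ℝ) : ℂ) * b x i j) i j) := by
      ext i j
      simpa using hentry i j
    rw [h1, Matrix.det_mul_row, Matrix.det_mul_column]
    have hp1 : (∏ j, ((x ^ μ j : ℝ) : ℂ)) = ((x ^ (∑ j, μ j) : ℝ) : ℂ) := by
      rw [← Complex.ofReal_prod, ← Real.rpow_sum_of_pos hx0]
    have hp2 : (∏ i : Fin (n+1), ((x ^ (-(i:ℕ):ℝ) : ℝ) : ℂ))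
        = ((x ^ (-((n * (n+1) : ℝ)/2)) : ℝ) : ℂ) := by
      rw [← Complex.ofReal_prod, ← Real.rpow_sum_of_pos hx0]
      rw [← hS, ← Finset.sum_neg_distrib]
    rw [hp1, hp2]
    have hmul : (x ^ (∑ j, μ j) : ℝ) * x ^ (-((n * (n+1) : ℝ)/2))
        = x ^ ((∑ j, μ j) - (n * (n + 1) : ℝ) / 2) := by
      rw [← Real.rpow_add hx0]; ring_nf
    have hE0 : ((x ^ ((∑ j, μ j) - (n * (n + 1) : ℝ) / 2) : ℝ) : ℂ) ≠ 0 := by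
      exact_mod_cast (Real.rpow_pos_of_pos hx0 _).ne'
    rw [← mul_assoc, ← Complex.ofReal_mul, hmul, mul_div_cancel_left₀ _ hE0]
  -- value of det c
  have hcval : c.det = (∏ i : Fin (n + 1), ∏ j ∈ Finset.Ioi i, ((μ j - μ i : ℝ) : ℂ)) *
      ∏ j, (φ j).leadingCoeff := by
    set p : Fin (n+1) → Polynomial ℂ :=
      fun i => ∏ k ∈ Finset.range i, (Polynomial.X - Polynomial.C (k:ℂ)) with hp
    have hmonic : ∀ i, (p i).Monic := fun i =>
      Polynomial.monic_prod_of_monic _ _ fun k _ => Polynomial.monic_X_sub_C _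
    have hdeg : ∀ i : Fin (n+1), (p i).natDegree = i := by
      intro i
      rw [hp, Polynomial.natDegree_prod_of_monic _ _ fun k _ => Polynomial.monic_X_sub_C _]
      simp only [Polynomial.natDegree_X_sub_C, Finset.sum_const, Finset.card_range,
        smul_eq_mul, mul_one]
    have hc2 : c = Matrix.of fun i j => (φ j).leadingCoeff * (p i).eval ((μ j : ℝ) : ℂ) := by
      ext i j
      rw [hc]
      simp only [Matrix.of_apply, wrQ_coeff]
      rw [hp, Polynomial.eval_prod]
      rw [mul_comm]
      congr 1
      refine Finset.prod_congr rfl fun k _ => ?_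
      simp only [Polynomial.eval_sub, Polynomial.eval_X, Polynomial.eval_C]
      rw [hμ j]
      push_cast
      ring
    rw [hc2]
    have := Matrix.det_mul_row (fun j => (φ j).leadingCoeff)
      (Matrix.of fun i j : Fin (n+1) => (p i).eval ((μ j : ℝ) : ℂ))
    rw [show (Matrix.of fun i j : Fin (n+1) => (φ j).leadingCoeff * (p i).eval ((μ j : ℝ) : ℂ))
        = Matrix.of fun i j => (fun j => (φ j).leadingCoeff) j *
          (Matrix.of fun i j : Fin (n+1) => (p i).eval ((μ j : ℝ) : ℂ)) i j from rfl, this]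
    have htr : (Matrix.of fun i j : Fin (n+1) => (p i).eval ((μ j : ℝ) : ℂ)).det
        = (Matrix.of fun i j : Fin (n+1) => (p j).eval ((μ i : ℝ) : ℂ)).det := by
      rw [← Matrix.det_transpose]
      congr 1
    rw [htr, ← Matrix.det_eval_matrixOfPolynomials_eq_det_vandermonde
      (fun j => ((μ j : ℝ) : ℂ)) p (fun i => hdeg i) hmonic]
    rw [Matrix.det_vandermonde]
    rw [mul_comm]
    congr 1
    refine Finset.prod_congr rfl fun i _ => Finset.prod_congr rfl fun j _ => ?_
    push_cast
    ring
  rw [← hcval]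
  exact hdet.congr' heq.symm
end

section
/- Let n ≥ 1 and m ≥ 1 be natural numbers, let 0 = β_0 < β_1 < ⋯ < β_n be real numbers, let z_1, …, z_m be pairwise distinct nonzero complex numbers, and let (γ_{ℓ,j}), 1 ≤ ℓ ≤ m, 1 ≤ j ≤ n, be nonnegative integers. Then there exist polynomials φ_1, …, φ_n with complex coefficients and a nonzero complex constant c such that: (i) φ_k(0) ≠ 0 and deg φ_k = Σ_{j=1}^{k} Σ_{ℓ=1}^{m} γ_{ℓ,j} for each 1 ≤ k ≤ n; and (ii) for every x > 0, the Wronskian at x (with derivatives taken within (0, ∞)) of the n+1 functions (0, ∞) → ℂ given by t ↦ t^{β_0}, t ↦ t^{β_1}·φ_1(t), …, t ↦ t^{β_n}·φ_n(t) equals c · x^{β_1 + ⋯ + β_n − n(n+1)/2} · ∏_{ℓ=1}^{m} (x − z_ℓ)^{n·γ_{ℓ,1} + (n−1)·γ_{ℓ,2} + ⋯ + γ_{ℓ,n}}. -/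
open Polynomial

noncomputable section WronskianAux

/-- The operator `p ↦ β p + X p'` encoding `d/dt (t^β p(t)) = t^(β-1) · (wop β p)(t)`. -/
def wop (β : ℝ) (p : Polynomial ℂ) : Polynomial ℂ :=
  C (β : ℂ) * p + X * derivative p

lemma wop_coeff (β : ℝ) (p : Polynomial ℂ) (k : ℕ) :
    (wop β p).coeff k = ((β : ℂ) + k) * p.coeff k := by
  rcases k with _ | k
  · simp [wop]
  · simp only [wop, coeff_add, coeff_C_mul, coeff_X_mul, coeff_derivative]
    push_cast
    ring

lemma wop_zero (β : ℝ) : wop β 0 = 0 := by simp [wop]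

lemma wop_add (β : ℝ) (p q : Polynomial ℂ) : wop β (p + q) = wop β p + wop β q := by
  simp only [wop, derivative_add]
  ring

lemma wop_C_mul (β : ℝ) (a : ℂ) (p : Polynomial ℂ) :
    wop β (C a * p) = C a * wop β p := by
  simp only [wop, derivative_C_mul]
  ring

lemma wop_sum {α : Type*} (β : ℝ) (s : Finset α) (f : α → Polynomial ℂ) :
    wop β (∑ a ∈ s, f a) = ∑ a ∈ s, wop β (f a) := by
  classical
  induction s using Finset.induction with
  | empty => simp [wop_zero]
  | insert _ _ h ih => simp [Finset.sum_insert h, wop_add, ih]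

lemma wop_eq (β β' : ℝ) (p : Polynomial ℂ) :
    wop β p = wop β' p + C ((β : ℂ) - (β' : ℂ)) * p := by
  simp only [wop, map_sub]
  ring

/-- Iterated operator: `wopIter i β p` satisfies
`(d/dt)^i (t^β p(t)) = t^(β-i) · (wopIter i β p)(t)`. -/
def wopIter : ℕ → ℝ → Polynomial ℂ → Polynomial ℂ
  | 0, _, p => p
  | (i+1), β, p => wopIter i (β - 1) (wop β p)

lemma wopIter_zero_poly (β : ℝ) : ∀ i, wopIter i β 0 = 0
  | 0 => rfl
  | (i+1) => by
      show wopIter i (β - 1) (wop β 0) = 0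
      rw [wop_zero]
      exact wopIter_zero_poly (β - 1) i

lemma wopIter_succ' (i : ℕ) (β : ℝ) (p : Polynomial ℂ) :
    wopIter (i+1) β p = wop (β - i) (wopIter i β p) := by
  induction i generalizing β p with
  | zero =>
      simp [wopIter]
  | succ i ih =>
      show wopIter (i+1) (β - 1) (wop β p) = _
      rw [ih]
      have h : (β - 1) - (i : ℝ) = β - ((i+1 : ℕ) : ℝ) := by push_cast; ring
      rw [h]
      rfl

/-- Inverse of `wop β` (for `β > 0`). -/
def wopInv (β : ℝ) (q : Polynomial ℂ) : Polynomial ℂ :=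
  ∑ k ∈ Finset.range (q.natDegree + 1), C (q.coeff k / ((β : ℂ) + k)) * X ^ k

lemma wopInv_coeff (β : ℝ) (q : Polynomial ℂ) (k : ℕ) :
    (wopInv β q).coeff k = q.coeff k / ((β : ℂ) + k) := by
  unfold wopInv
  rw [finset_sum_coeff]
  simp only [coeff_C_mul, coeff_X_pow, mul_ite, mul_one, mul_zero]
  rw [Finset.sum_ite_eq (Finset.range (q.natDegree + 1)) k
    (fun j => q.coeff j / ((β : ℂ) + j))]
  by_cases h : k ∈ Finset.range (q.natDegree + 1)
  · rw [if_pos h]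
  · rw [if_neg h]
    have : q.natDegree < k := by
      simpa [Finset.mem_range, Nat.lt_succ_iff, not_le] using h
    rw [coeff_eq_zero_of_natDegree_lt this, zero_div]

lemma cast_add_nat_ne_zero {β : ℝ} (hβ : 0 < β) (k : ℕ) : ((β : ℂ) + k) ≠ 0 := by
  have h : ((β + k : ℝ) : ℂ) ≠ 0 := by
    exact_mod_cast ne_of_gt (by positivity)
  simpa using h

lemma wop_wopInv {β : ℝ} (hβ : 0 < β) (q : Polynomial ℂ) :
    wop β (wopInv β q) = q := by
  ext k
  rw [wop_coeff, wopInv_coeff, mul_div_cancel₀ _ (cast_add_nat_ne_zero hβ k)]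

lemma wopInv_natDegree {β : ℝ} (hβ : 0 < β) (q : Polynomial ℂ) :
    (wopInv β q).natDegree = q.natDegree := by
  rcases eq_or_ne q 0 with rfl | hq
  · simp [wopInv]
  · apply le_antisymm
    · rw [natDegree_le_iff_coeff_eq_zero]
      intro N hN
      rw [wopInv_coeff, coeff_eq_zero_of_natDegree_lt hN, zero_div]
    · apply le_natDegree_of_ne_zero
      rw [wopInv_coeff]
      exact div_ne_zero (mt leadingCoeff_eq_zero.mp hq) (cast_add_nat_ne_zero hβ _)

lemma wopInv_eval_zero (β : ℝ) (q : Polynomial ℂ) :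
    (wopInv β q).eval 0 = q.eval 0 / (β : ℂ) := by
  rw [← coeff_zero_eq_eval_zero, ← coeff_zero_eq_eval_zero, wopInv_coeff]
  norm_num

end WronskianAux

noncomputable section WronskianAux2
open Polynomial

/-- Generic Pascal-recombination step used for the Leibniz-type expansions. -/
lemma pascal_step (g : ℕ → ℕ → Polynomial ℂ) (i : ℕ) :
    (∑ k ∈ Finset.range (i+1), C ((i.choose k : ℕ) : ℂ) * (g (i-k) (k+1) + g (i-k+1) k))
      = ∑ k ∈ Finset.range (i+2), C (((i+1).choose k : ℕ) : ℂ) * g (i+1-k) k := by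
  have hR : ∑ k ∈ Finset.range (i+2), C (((i+1).choose k : ℕ) : ℂ) * g (i+1-k) k
      = (∑ k ∈ Finset.range (i+1), (C ((i.choose k : ℕ) : ℂ) * g (i-k) (k+1)
          + C ((i.choose (k+1) : ℕ) : ℂ) * g (i-k) (k+1))) + g (i+1) 0 := by
    rw [Finset.sum_range_succ' (fun k => C (((i+1).choose k : ℕ) : ℂ) * g (i+1-k) k) (i+1)]
    congr 1
    · apply Finset.sum_congr rfl
      intro k hk
      rw [Nat.choose_succ_succ i k, show i + 1 - (k+1) = i - k from by omega,
        Nat.cast_add, C_add]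
      ring
    · simp
  rw [hR]
  have hsecond : ∑ k ∈ Finset.range (i+1), C ((i.choose k : ℕ) : ℂ) * g (i-k+1) k
      = (∑ k ∈ Finset.range (i+1), C ((i.choose (k+1) : ℕ) : ℂ) * g (i-k) (k+1)) + g (i+1) 0 := by
    rw [Finset.sum_range_succ' (fun k => C ((i.choose k : ℕ) : ℂ) * g (i-k+1) k) i]
    congr 1
    · have h : ∑ k ∈ Finset.range (i+1), C ((i.choose (k+1) : ℕ) : ℂ) * g (i-k) (k+1)
          = ∑ k ∈ Finset.range i, C ((i.choose (k+1) : ℕ) : ℂ) * g (i-k) (k+1) := by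
        rw [Finset.sum_range_succ]
        simp [Nat.choose_succ_self]
      rw [h]
      apply Finset.sum_congr rfl
      intro k hk
      rw [show i - (k+1) + 1 = i - k from by
        have := Finset.mem_range.mp hk; omega]
    · simp
  calc ∑ k ∈ Finset.range (i+1), C ((i.choose k : ℕ) : ℂ) * (g (i-k) (k+1) + g (i-k+1) k)
      = (∑ k ∈ Finset.range (i+1), C ((i.choose k : ℕ) : ℂ) * g (i-k) (k+1))
        + ∑ k ∈ Finset.range (i+1), C ((i.choose k : ℕ) : ℂ) * g (i-k+1) k := by
        rw [← Finset.sum_add_distrib]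
        apply Finset.sum_congr rfl
        intro k hk
        ring
    _ = _ := by
        rw [hsecond, ← add_assoc, ← Finset.sum_add_distrib]

/-- Leibniz-type expansion of `wop α` applied to `X^m · B^(m) · P`. -/
lemma wop_mul_aux (α : ℝ) (m : ℕ) (B P : Polynomial ℂ) :
    wop α (X^m * derivative^[m] B * P)
      = X^m * derivative^[m] B * wop α P + C (m : ℂ) * (X^m * derivative^[m] B * P)
        + X^(m+1) * derivative^[m+1] B * P := by
  rcases m with _ | m
  · simp only [pow_zero, one_mul, Function.iterate_zero_apply,
      Nat.cast_zero, map_zero, zero_mul, add_zero, wop, derivative_mul, pow_one]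
    rw [Function.iterate_one]
    ring
  · simp only [wop, derivative_mul, derivative_X_pow, Function.iterate_succ_apply']
    have h : (m + 1 : ℕ) - 1 = m := rfl
    rw [h]
    push_cast
    ring

lemma cast_sub_of_le {i k : ℕ} (h : k ≤ i) : ((i - k : ℕ) : ℂ) = (i : ℂ) - (k : ℂ) := by
  have h2 := congrArg (fun t : ℕ => (t : ℂ)) (Nat.sub_add_cancel h)
  push_cast at h2
  linear_combination h2

lemma wopIter_mul (B p : Polynomial ℂ) : ∀ (i : ℕ) (β : ℝ),
    wopIter i β (B * p)
      = ∑ k ∈ Finset.range (i+1), C ((i.choose k : ℕ) : ℂ)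
          * (X^(i-k) * derivative^[i-k] B * wopIter k β p) := by
  intro i
  induction i with
  | zero => intro β; simp [wopIter]
  | succ i ih =>
      intro β
      rw [wopIter_succ', ih β, wop_sum]
      have hterm : ∀ k ∈ Finset.range (i+1),
          wop (β - (i : ℕ)) (C ((i.choose k : ℕ) : ℂ)
              * (X^(i-k) * derivative^[i-k] B * wopIter k β p))
            = C ((i.choose k : ℕ) : ℂ) *
              ((X^(i-k) * derivative^[i-k] B * wopIter (k+1) β p)
               + (X^(i-k+1) * derivative^[i-k+1] B * wopIter k β p)) := by
        intro k hk
        have hk' : k ≤ i := Nat.lt_succ_iff.mp (Finset.mem_range.mp hk)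
        rw [wop_C_mul, wop_mul_aux]
        have hw : wop (β - (i : ℕ)) (wopIter k β p)
            = wopIter (k+1) β p + C ((k : ℂ) - (i : ℂ)) * wopIter k β p := by
          rw [wopIter_succ' k β, wop_eq (β - (i : ℕ)) (β - (k : ℕ))]
          congr 2
          push_cast
          ring
        rw [hw, cast_sub_of_le hk']
        simp only [map_sub]
        ring
      rw [Finset.sum_congr rfl hterm,
        pascal_step (fun m k => X^m * derivative^[m] B * wopIter k β p) i]

/-- Complex falling-factorial-type product `s(s-1)⋯(s-m+1)`. -/
def ffc (s : ℝ) : ℕ → ℂ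
  | 0 => 1
  | (m+1) => ffc s m * ((s : ℂ) - m)

lemma wopIter_shift (p : Polynomial ℂ) (s : ℝ) : ∀ (i : ℕ) (β : ℝ),
    wopIter i (β + s) p
      = ∑ k ∈ Finset.range (i+1), C (((i.choose k : ℕ) : ℂ) * ffc s (i-k)) * wopIter k β p := by
  intro i
  induction i with
  | zero => intro β; simp [wopIter, ffc]
  | succ i ih =>
      intro β
      rw [wopIter_succ', ih β, wop_sum]
      have hterm : ∀ k ∈ Finset.range (i+1),
          wop ((β + s) - (i : ℕ)) (C (((i.choose k : ℕ) : ℂ) * ffc s (i-k)) * wopIter k β p)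
            = C ((i.choose k : ℕ) : ℂ) *
                ((C (ffc s (i-k)) * wopIter (k+1) β p) + (C (ffc s (i-k+1)) * wopIter k β p)) := by
        intro k hk
        have hk' : k ≤ i := Nat.lt_succ_iff.mp (Finset.mem_range.mp hk)
        have hw : wop ((β + s) - (i : ℕ)) (wopIter k β p)
            = wopIter (k+1) β p + C ((s : ℂ) - ((i - k : ℕ) : ℂ)) * wopIter k β p := by
          rw [wopIter_succ' k β, wop_eq ((β + s) - (i : ℕ)) (β - (k : ℕ))]
          congr 2
          rw [cast_sub_of_le hk']
          push_cast
          ring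
        rw [wop_C_mul, hw]
        have hffc : ffc s (i-k) * ((s : ℂ) - ((i - k : ℕ) : ℂ)) = ffc s (i-k+1) := rfl
        rw [← hffc, C_mul, C_mul]
        ring
      rw [Finset.sum_congr rfl hterm,
        pascal_step (fun m k => C (ffc s m) * wopIter k β p) i]
      apply Finset.sum_congr rfl
      intro k hk
      rw [C_mul]
      ring

end WronskianAux2

noncomputable section WronskianAux3
open Polynomial

/-- The matrix of iterated operators whose determinant encodes the Wronskian. -/
def wMat (n : ℕ) (b : Fin n → ℝ) (φ : Fin n → Polynomial ℂ) :
    Matrix (Fin n) (Fin n) (Polynomial ℂ) :=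
  Matrix.of fun i j => wopIter (i : ℕ) (b j) (φ j)

/-- Bridge between `Fin`-sums with an `if` and `range`-sums. -/
lemma fin_if_sum (n : ℕ) (i : Fin n) (F : ℕ → Polynomial ℂ) :
    (∑ k : Fin n, if (k : ℕ) ≤ (i : ℕ) then F (k : ℕ) else 0)
      = ∑ k ∈ Finset.range ((i : ℕ) + 1), F k := by
  rw [Fin.sum_univ_eq_sum_range (fun k => if k ≤ (i : ℕ) then F k else 0) n]
  rw [← Finset.sum_subset (Finset.range_subset_range.mpr i.isLt)]
  · apply Finset.sum_congr rfl
    intro k hk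
    rw [if_pos (Nat.lt_succ_iff.mp (Finset.mem_range.mp hk))]
  · intro k _ hk
    rw [if_neg (by simpa [Nat.lt_succ_iff, not_le] using hk)]

lemma wdet_mul (n : ℕ) (b : Fin n → ℝ) (B : Polynomial ℂ) (φ : Fin n → Polynomial ℂ) :
    (wMat n b (fun j => B * φ j)).det = B ^ n * (wMat n b φ).det := by
  classical
  set L : Matrix (Fin n) (Fin n) (Polynomial ℂ) := Matrix.of fun i k =>
    if (k : ℕ) ≤ (i : ℕ) then
      C (((i : ℕ).choose (k : ℕ) : ℕ) : ℂ) * (X ^ ((i : ℕ) - (k : ℕ)) *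
        derivative^[(i : ℕ) - (k : ℕ)] B)
    else 0 with hL
  have hfac : wMat n b (fun j => B * φ j) = L * wMat n b φ := by
    apply Matrix.ext
    intro i j
    rw [Matrix.mul_apply]
    show wopIter (i : ℕ) (b j) (B * φ j) = _
    rw [wopIter_mul B (φ j) (i : ℕ) (b j)]
    rw [show (∑ k : Fin n, L i k * wMat n b φ k j)
        = ∑ k : Fin n, (if (k : ℕ) ≤ (i : ℕ) then
            C (((i : ℕ).choose (k : ℕ) : ℕ) : ℂ) * (X ^ ((i : ℕ) - (k : ℕ)) *
              derivative^[(i : ℕ) - (k : ℕ)] B * wopIter (k : ℕ) (b j) (φ j)) else 0) from by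
      apply Finset.sum_congr rfl
      intro k _
      by_cases h : (k : ℕ) ≤ (i : ℕ)
      · simp only [hL, Matrix.of_apply, if_pos h, wMat]
        ring
      · simp only [hL, Matrix.of_apply, if_neg h, zero_mul]]
    exact (fin_if_sum n i (fun k => C (((i : ℕ).choose k : ℕ) : ℂ) * (X ^ ((i : ℕ) - k) *
      derivative^[(i : ℕ) - k] B * wopIter k (b j) (φ j)))).symm
  rw [hfac, Matrix.det_mul]
  have hLdet : L.det = B ^ n := by
    have htri : L.BlockTriangular OrderDual.toDual := by
      intro i k h
      have h' : (i : ℕ) < (k : ℕ) := h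
      simp only [hL, Matrix.of_apply, if_neg (not_le.mpr h')]
    rw [Matrix.det_of_lowerTriangular L htri]
    have hdiag : ∀ i : Fin n, L i i = B := by
      intro i
      simp [hL, Nat.choose_self]
    rw [Finset.prod_congr rfl (fun i _ => hdiag i)]
    simp
  rw [hLdet]

lemma wdet_shift (n : ℕ) (b : Fin n → ℝ) (s : ℝ) (φ : Fin n → Polynomial ℂ) :
    (wMat n (fun j => b j + s) φ).det = (wMat n b φ).det := by
  classical
  set L : Matrix (Fin n) (Fin n) (Polynomial ℂ) := Matrix.of fun i k =>
    if (k : ℕ) ≤ (i : ℕ) then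
      C ((((i : ℕ).choose (k : ℕ) : ℕ) : ℂ) * ffc s ((i : ℕ) - (k : ℕ)))
    else 0 with hL
  have hfac : wMat n (fun j => b j + s) φ = L * wMat n b φ := by
    apply Matrix.ext
    intro i j
    rw [Matrix.mul_apply]
    show wopIter (i : ℕ) (b j + s) (φ j) = _
    rw [wopIter_shift (φ j) s (i : ℕ) (b j)]
    rw [show (∑ k : Fin n, L i k * wMat n b φ k j)
        = ∑ k : Fin n, (if (k : ℕ) ≤ (i : ℕ) then
            C ((((i : ℕ).choose (k : ℕ) : ℕ) : ℂ) * ffc s ((i : ℕ) - (k : ℕ)))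
              * wopIter (k : ℕ) (b j) (φ j) else 0) from by
      apply Finset.sum_congr rfl
      intro k _
      by_cases h : (k : ℕ) ≤ (i : ℕ)
      · simp only [hL, Matrix.of_apply, if_pos h, wMat]
      · simp only [hL, Matrix.of_apply, if_neg h, zero_mul]]
    exact (fin_if_sum n i (fun k => C ((((i : ℕ).choose k : ℕ) : ℂ) * ffc s ((i : ℕ) - k))
      * wopIter k (b j) (φ j))).symm
  rw [hfac, Matrix.det_mul]
  have hLdet : L.det = 1 := by
    have htri : L.BlockTriangular OrderDual.toDual := by
      intro i k h
      have h' : (i : ℕ) < (k : ℕ) := h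
      simp only [hL, Matrix.of_apply, if_neg (not_le.mpr h')]
    rw [Matrix.det_of_lowerTriangular L htri]
    have hdiag : ∀ i : Fin n, L i i = 1 := by
      intro i
      simp [hL, Nat.choose_self, ffc]
    rw [Finset.prod_congr rfl (fun i _ => hdiag i)]
    simp
  rw [hLdet, one_mul]

/-- Column reduction: when the zeroth function is `t^0 · 1`, the Wronskian determinant
reduces to the determinant for the derivatives of the other functions. -/
lemma wdet_reduce (N : ℕ) (b : Fin (N+1) → ℝ) (hb0 : b 0 = 0) (φ : Fin N → Polynomial ℂ) :
    (wMat (N+1) b (Fin.cases 1 φ)).det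
      = (wMat N (fun j => b j.succ - 1) (fun j => wop (b j.succ) (φ j))).det := by
  classical
  rw [Matrix.det_succ_column_zero]
  have hcol : ∀ i : Fin (N+1), wMat (N+1) b (Fin.cases 1 φ) i 0 = if i = 0 then 1 else 0 := by
    intro i
    show wopIter (i : ℕ) (b 0) ((Fin.cases 1 φ : ∀ _ : Fin (N+1), Polynomial ℂ) 0) = _
    rw [hb0]
    induction i using Fin.cases with
    | zero => simp [wopIter]
    | succ i =>
        rw [if_neg (Fin.succ_ne_zero i)]
        simp only [Fin.cases_zero, Fin.val_succ]
        show wopIter (i : ℕ) (0 - 1) (wop 0 1) = 0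
        rw [show wop 0 1 = 0 from by simp [wop], wopIter_zero_poly]
  rw [Finset.sum_eq_single_of_mem 0 (Finset.mem_univ 0)
    (fun i _ hi => by rw [hcol i, if_neg hi, mul_zero, zero_mul])]
  · rw [hcol 0, if_pos rfl]
    simp only [Fin.val_zero, pow_zero, one_mul, mul_one, Fin.succAbove_zero]
    congr 1

end WronskianAux3

noncomputable section WronskianAux4
open Polynomial

lemma sum_Iic_succ_fin {n : ℕ} (f : Fin (n+1) → ℕ) (k : Fin n) :
    ∑ j ∈ Finset.Iic k.succ, f j = f 0 + ∑ j ∈ Finset.Iic k, f j.succ := by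
  classical
  have hset : Finset.Iic k.succ
      = insert (0 : Fin (n+1)) ((Finset.Iic k).map ⟨Fin.succ, Fin.succ_injective n⟩) := by
    ext j
    induction j using Fin.cases with
    | zero =>
        simp [Fin.zero_le]
    | succ j =>
        simp only [Finset.mem_Iic, Finset.mem_insert, Finset.mem_map,
          Function.Embedding.coeFn_mk]
        constructor
        · intro h
          exact Or.inr ⟨j, Fin.succ_le_succ_iff.mp h, rfl⟩
        · rintro (h | ⟨a, ha, haj⟩)
          · exact absurd h (Fin.succ_ne_zero j)
          · obtain rfl : a = j := Fin.succ_injective n haj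
            exact Fin.succ_le_succ_iff.mpr ha
  rw [hset, Finset.sum_insert, Finset.sum_map]
  · rfl
  · simp only [Finset.mem_map, Function.Embedding.coeFn_mk]
    rintro ⟨a, _, ha⟩
    exact Fin.succ_ne_zero a ha

lemma sum_Iic_zero_fin {n : ℕ} (f : Fin (n+1) → ℕ) :
    ∑ j ∈ Finset.Iic (0 : Fin (n+1)), f j = f 0 := by
  have h : Finset.Iic (0 : Fin (n+1)) = {0} := by
    ext j
    simp [Fin.le_zero_iff]
  rw [h, Finset.sum_singleton]

variable {m : ℕ} (z : Fin m → ℂ)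

lemma prodZ_natDegree (e : Fin m → ℕ) :
    (∏ ℓ, (X - C (z ℓ)) ^ (e ℓ)).natDegree = ∑ ℓ, e ℓ := by
  rw [natDegree_prod_of_monic _ _ (fun ℓ _ => (monic_X_sub_C (z ℓ)).pow _)]
  apply Finset.sum_congr rfl
  intro ℓ _
  rw [natDegree_pow, natDegree_X_sub_C, mul_one]

lemma prodZ_eval_zero (hz0 : ∀ ℓ, z ℓ ≠ 0) (e : Fin m → ℕ) :
    (∏ ℓ, (X - C (z ℓ)) ^ (e ℓ)).eval 0 ≠ 0 := by
  rw [eval_prod]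
  apply Finset.prod_ne_zero_iff.mpr
  intro ℓ _
  rw [eval_pow, eval_sub, eval_X, eval_C]
  exact pow_ne_zero _ (by simpa using neg_ne_zero.mpr (hz0 ℓ))

/-- The main algebraic construction, by induction on the number of functions. -/
lemma key_induction (hz0 : ∀ ℓ, z ℓ ≠ 0) :
    ∀ (N : ℕ) (b : Fin (N+2) → ℝ), b 0 = 0 → StrictMono b →
    ∀ γ : Fin m → Fin (N+1) → ℕ,
    ∃ (φ : Fin (N+1) → Polynomial ℂ) (c : ℂ), c ≠ 0 ∧
      (∀ k, (φ k).eval 0 ≠ 0 ∧ (φ k).natDegree = ∑ j ∈ Finset.Iic k, ∑ ℓ, γ ℓ j) ∧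
      (wMat (N+2) b (Fin.cases 1 φ)).det
        = C c * ∏ ℓ, (X - C (z ℓ)) ^ (∑ j : Fin (N+1), ((N+1) - (j : ℕ)) * γ ℓ j) := by
  intro N
  induction N with
  | zero =>
      intro b hb0 hmono γ
      have hb1 : 0 < b 1 := by
        have h := hmono (show (0 : Fin 2) < 1 from by decide)
        rwa [hb0] at h
      refine ⟨fun _ => wopInv (b 1) (∏ ℓ, (X - C (z ℓ)) ^ (γ ℓ 0)), 1, one_ne_zero, ?_, ?_⟩
      · intro k
        constructor
        · rw [wopInv_eval_zero]
          exact div_ne_zero (prodZ_eval_zero z hz0 _) (by exact_mod_cast ne_of_gt hb1)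
        · rw [wopInv_natDegree hb1, prodZ_natDegree]
          have hk : k = 0 := Fin.fin_one_eq_zero k
          subst hk
          rw [sum_Iic_zero_fin (fun j => ∑ ℓ, γ ℓ j)]
      · rw [wdet_reduce 1 b hb0]
        have h1 : (wMat 1 (fun j => b j.succ - 1)
            (fun j => wop (b j.succ) (wopInv (b 1) (∏ ℓ, (X - C (z ℓ)) ^ (γ ℓ 0))))).det
            = wop (b (0 : Fin 1).succ) (wopInv (b 1) (∏ ℓ, (X - C (z ℓ)) ^ (γ ℓ 0))) := by
          rw [Matrix.det_fin_one]
          rfl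
        rw [h1, show ((0 : Fin 1).succ : Fin 2) = 1 from rfl, wop_wopInv hb1]
        rw [map_one, one_mul]
        apply Finset.prod_congr rfl
        intro ℓ _
        congr 1
        rw [Fin.sum_univ_one]
        simp
  | succ N ih =>
      intro b hb0 hmono γ
      have hδ0 : (fun j : Fin (N+2) => b j.succ - b 1) 0 = 0 := by
        simp [Fin.succ_zero_eq_one]
      have hδmono : StrictMono (fun j : Fin (N+2) => b j.succ - b 1) := by
        intro a a' haa'
        exact sub_lt_sub_right (hmono (Fin.succ_lt_succ_iff.mpr haa')) _
      obtain ⟨ρ, c', hc', hρ, hdet⟩ :=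
        ih (fun j : Fin (N+2) => b j.succ - b 1) hδ0 hδmono (fun ℓ j => γ ℓ j.succ)
      set ρe : Fin (N+2) → Polynomial ℂ := Fin.cases 1 ρ with hρe
      have hρe0 : ρe 0 = 1 := by simp [hρe]
      have hρesucc : ∀ k : Fin (N+1), ρe k.succ = ρ k := by
        intro k; simp [hρe]
      set B : Polynomial ℂ := ∏ ℓ, (X - C (z ℓ)) ^ (γ ℓ 0) with hB
      have hB0 : B.eval 0 ≠ 0 := prodZ_eval_zero z hz0 _
      have hBne : B ≠ 0 := fun h => hB0 (by rw [h, eval_zero])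
      have hbpos : ∀ k : Fin (N+2), 0 < b k.succ := by
        intro k
        have h := hmono (show (0 : Fin (N+3)) < k.succ from k.succ_pos)
        rwa [hb0] at h
      have hψ0 : ∀ k, ((fun j => B * ρe j) k).eval 0 ≠ 0 := by
        intro k
        simp only [eval_mul]
        apply mul_ne_zero hB0
        induction k using Fin.cases with
        | zero => rw [hρe0]; simp
        | succ k => rw [hρesucc k]; exact (hρ k).1
      refine ⟨fun k => wopInv (b k.succ) (B * ρe k), c', hc', ?_, ?_⟩
      · intro k
        constructor
        · rw [wopInv_eval_zero]
          exact div_ne_zero (hψ0 k) (by exact_mod_cast ne_of_gt (hbpos k))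
        · rw [wopInv_natDegree (hbpos k)]
          have hρene : ρe k ≠ 0 := by
            intro h
            apply hψ0 k
            simp [h]
          rw [natDegree_mul hBne hρene]
          induction k using Fin.cases with
          | zero =>
              rw [sum_Iic_zero_fin (fun j => ∑ ℓ, γ ℓ j), hρe0, natDegree_one, add_zero, hB,
                prodZ_natDegree]
          | succ k =>
              rw [hρesucc k, (hρ k).2, sum_Iic_succ_fin (fun j => ∑ ℓ, γ ℓ j) k]
              congr 1
              rw [hB, prodZ_natDegree]
      · rw [wdet_reduce (N+2) b hb0]
        have hstep2 : (fun j : Fin (N+2) =>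
            wop (b j.succ) ((fun k => wopInv (b k.succ) (B * ρe k)) j)) = fun j => B * ρe j := by
          funext j
          exact wop_wopInv (hbpos j) _
        rw [hstep2]
        have hstep3 : (fun j : Fin (N+2) => b j.succ - 1)
            = (fun j => (fun j : Fin (N+2) => b j.succ - b 1) j + (b 1 - 1)) := by
          funext j
          ring
        rw [hstep3, wdet_shift (N+2) (fun j : Fin (N+2) => b j.succ - b 1) (b 1 - 1)
          (fun j => B * ρe j)]
        rw [wdet_mul (N+2) (fun j : Fin (N+2) => b j.succ - b 1) B ρe]
        rw [hρe, hdet]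
        have hexp : ∀ ℓ, γ ℓ 0 * (N+2) + ∑ j : Fin (N+1), ((N+1) - (j : ℕ)) * γ ℓ j.succ
            = ∑ j : Fin (N+2), ((N+2) - (j : ℕ)) * γ ℓ j := by
          intro ℓ
          conv_rhs => rw [Fin.sum_univ_succ]
          have h1 : ∀ j : Fin (N+1),
              ((N+2) - ((j.succ : Fin (N+2)) : ℕ)) * γ ℓ j.succ
                = ((N+1) - (j : ℕ)) * γ ℓ j.succ := by
            intro j
            rw [Fin.val_succ]
            congr 1
            omega
          rw [Finset.sum_congr rfl (fun j _ => h1 j)]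
          simp [mul_comm]
        have hBpow : B ^ (N+2) = ∏ ℓ, (X - C (z ℓ)) ^ (γ ℓ 0 * (N+2)) := by
          rw [hB, ← Finset.prod_pow]
          apply Finset.prod_congr rfl
          intro ℓ _
          exact (pow_mul _ _ _).symm
        rw [hBpow, mul_left_comm, ← Finset.prod_mul_distrib]
        congr 1
        apply Finset.prod_congr rfl
        intro ℓ _
        rw [← pow_add]
        congr 1
        have h2 : ∑ j : Fin (N+1+1), ((N+1+1) - (j : ℕ)) * γ ℓ j
            = ∑ j : Fin (N+2), ((N+2) - (j : ℕ)) * γ ℓ j := rfl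
        rw [h2, ← hexp ℓ]

end WronskianAux4

noncomputable section WronskianAux5
open Polynomial

/-- The function `t ↦ t^β · p(t)` on the positive reals. -/
def Ffun (β : ℝ) (p : Polynomial ℂ) : ℝ → ℂ := fun t => ((t ^ β : ℝ) : ℂ) * p.eval (t : ℂ)

lemma Ffun_hasDerivAt (β : ℝ) (p : Polynomial ℂ) {x : ℝ} (hx : 0 < x) :
    HasDerivAt (Ffun β p) (Ffun (β - 1) (wop β p) x) x := by
  have h1 : HasDerivAt (fun t : ℝ => ((t ^ β : ℝ) : ℂ)) ((β * x ^ (β - 1) : ℝ) : ℂ) x :=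
    (Real.hasDerivAt_rpow_const (Or.inl hx.ne')).ofReal_comp
  have h2 : HasDerivAt (fun t : ℝ => p.eval (t : ℂ)) ((derivative p).eval (x : ℂ)) x :=
    (p.hasDerivAt (x : ℂ)).comp_ofReal
  have h := h1.mul h2
  refine h.congr_deriv ?_
  have hxb : (x : ℝ) ^ β = x ^ (β - 1) * x := by
    rw [← Real.rpow_add_one hx.ne' (β - 1)]
    norm_num
  simp only [Ffun, wop, eval_add, eval_mul, eval_C, eval_X, hxb]
  push_cast
  ring

lemma iter_deriv_Ffun :
    ∀ (i : ℕ) (β : ℝ) (p : Polynomial ℂ), ∀ x ∈ Set.Ioi (0 : ℝ),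
    iteratedDerivWithin i (Ffun β p) (Set.Ioi 0) x = Ffun (β - i) (wopIter i β p) x := by
  intro i
  induction i with
  | zero =>
      intro β p x hx
      simp [wopIter]
  | succ i ih =>
      intro β p x hx
      rw [iteratedDerivWithin_succ']
      have heq : Set.EqOn (derivWithin (Ffun β p) (Set.Ioi 0)) (Ffun (β - 1) (wop β p))
          (Set.Ioi 0) := by
        intro y hy
        rw [derivWithin_of_isOpen isOpen_Ioi hy]
        exact (Ffun_hasDerivAt β p hy).deriv
      rw [iteratedDerivWithin_congr heq hx]
      rw [ih (β - 1) (wop β p) x hx]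
      have harg : β - 1 - (i : ℝ) = β - ((i + 1 : ℕ) : ℝ) := by push_cast; ring
      rw [harg]
      rfl

lemma rpow_finset_sum {α : Type*} {x : ℝ} (hx : 0 < x) (s : Finset α) (f : α → ℝ) :
    x ^ (∑ a ∈ s, f a) = ∏ a ∈ s, x ^ (f a) := by
  classical
  induction s using Finset.induction with
  | empty => simp
  | insert _ _ h ihs => rw [Finset.sum_insert h, Finset.prod_insert h, Real.rpow_add hx, ihs]

end WronskianAux5


open Polynomial in
/-- Existence of polynomials `φ_1, …, φ_n`, nonvanishing at `0` and of prescribed degrees,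
such that the Wronskian of `t^{β_0}, t^{β_1}φ_1(t), …, t^{β_n}φ_n(t)` equals
`c · x^{β_1+⋯+β_n − n(n+1)/2} · ∏_ℓ (x − z_ℓ)^{n γ_{ℓ,1}+⋯+γ_{ℓ,n}}`. -/
theorem exists_poly_wronskian_prescribed_zeros (n m : ℕ) (hn : 1 ≤ n) (hm : 1 ≤ m)
    (β : Fin (n + 1) → ℝ) (hβ0 : β 0 = 0) (hβ : StrictMono β)
    (z : Fin m → ℂ) (hz : Function.Injective z) (hz0 : ∀ ℓ, z ℓ ≠ 0)
    (γ : Fin m → Fin n → ℕ) :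
    ∃ (φ : Fin n → Polynomial ℂ) (c : ℂ), c ≠ 0 ∧
      (∀ k : Fin n, (φ k).eval 0 ≠ 0 ∧
        (φ k).natDegree = ∑ j ∈ Finset.Iic k, ∑ ℓ : Fin m, γ ℓ j) ∧
      (∀ x : ℝ, 0 < x →
        Matrix.det (Matrix.of fun i j : Fin (n + 1) =>
          iteratedDerivWithin (i : ℕ)
            (Fin.cases (motive := fun _ => ℝ → ℂ)
              (fun t : ℝ => ((t ^ β 0 : ℝ) : ℂ))
              (fun k (t : ℝ) => ((t ^ β k.succ : ℝ) : ℂ) * (φ k).eval (t : ℂ)) j)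
            (Set.Ioi (0 : ℝ)) x) =
        c * ((x ^ ((∑ k : Fin n, β k.succ) - (n * (n + 1) : ℝ) / 2) : ℝ) : ℂ) *
          ∏ ℓ : Fin m, ((x : ℂ) - z ℓ) ^ (∑ j : Fin n, (n - (j : ℕ)) * γ ℓ j)) := by
  obtain ⟨N, rfl⟩ : ∃ N, n = N + 1 := ⟨n - 1, (Nat.succ_pred_eq_of_pos hn).symm⟩
  obtain ⟨φ, c, hc, hcond, hdet⟩ := key_induction z hz0 N β hβ0 hβ γ
  refine ⟨φ, c, hc, hcond, ?_⟩
  intro x hx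
  have hxm : x ∈ Set.Ioi (0 : ℝ) := hx
  have hfun : ∀ j : Fin (N+2),
      (Fin.cases (motive := fun _ => ℝ → ℂ)
        (fun t : ℝ => ((t ^ β 0 : ℝ) : ℂ))
        (fun k (t : ℝ) => ((t ^ β k.succ : ℝ) : ℂ) * (φ k).eval (t : ℂ)) j)
      = Ffun (β j) ((Fin.cases (motive := fun _ => Polynomial ℂ) 1 φ) j) := by
    intro j
    induction j using Fin.cases with
    | zero => funext t; simp [Ffun]
    | succ k => funext t; simp [Ffun]
  have hmat : (Matrix.of fun i j : Fin (N+2) =>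
        iteratedDerivWithin (i : ℕ)
          (Fin.cases (motive := fun _ => ℝ → ℂ)
            (fun t : ℝ => ((t ^ β 0 : ℝ) : ℂ))
            (fun k (t : ℝ) => ((t ^ β k.succ : ℝ) : ℂ) * (φ k).eval (t : ℂ)) j)
          (Set.Ioi (0 : ℝ)) x)
      = Matrix.of (fun i j : Fin (N+2) => ((x ^ (β j) : ℝ) : ℂ) *
          ((Matrix.of fun i j : Fin (N+2) => ((x ^ (-((i : ℕ) : ℝ)) : ℝ) : ℂ) *
            ((wMat (N+2) β (Fin.cases 1 φ)).map (evalRingHom (x : ℂ))) i j) i j)) := by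
    apply Matrix.ext
    intro i j
    simp only [Matrix.of_apply]
    rw [hfun j, iter_deriv_Ffun (i : ℕ) (β j) _ x hxm]
    show ((x ^ (β j - (i : ℕ)) : ℝ) : ℂ) * _
        = ((x ^ (β j) : ℝ) : ℂ) * (((x ^ (-((i : ℕ) : ℝ)) : ℝ) : ℂ)
            * eval (x : ℂ) (wopIter (i : ℕ) (β j) (Fin.cases 1 φ j)))
    rw [show β j - ((i : ℕ) : ℝ) = β j + (-((i : ℕ) : ℝ)) from by ring, Real.rpow_add hx]
    push_cast
    ring
  have hmapdet : ((wMat (N+2) β (Fin.cases 1 φ)).map (⇑(evalRingHom (x:ℂ)))).det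
      = evalRingHom (x:ℂ) ((wMat (N+2) β (Fin.cases 1 φ)).det) :=
    ((evalRingHom (x:ℂ)).map_det _).symm
  rw [hmat, Matrix.det_mul_row, Matrix.det_mul_column, hmapdet, hdet]
  have hv : (∏ j : Fin (N+2), ((x ^ (β j) : ℝ) : ℂ))
      = ((x ^ (∑ j : Fin (N+2), β j) : ℝ) : ℂ) := by
    rw [rpow_finset_sum hx, Complex.ofReal_prod]
  have hw : (∏ i : Fin (N+2), ((x ^ (-((i : ℕ) : ℝ)) : ℝ) : ℂ))
      = ((x ^ (-(∑ i : Fin (N+2), ((i : ℕ) : ℝ))) : ℝ) : ℂ) := by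
    rw [← Finset.sum_neg_distrib, rpow_finset_sum hx, Complex.ofReal_prod]
  have hsum : ∑ j : Fin (N+2), β j = ∑ k : Fin (N+1), β k.succ := by
    rw [Fin.sum_univ_succ, hβ0, zero_add]
  have hS : ∑ i : Fin (N+2), ((i : ℕ) : ℝ) = (((N:ℝ)+1) * ((N:ℝ)+2)) / 2 := by
    have hnat : (∑ i ∈ Finset.range (N+2), i) * 2 = (N+2) * (N+2-1) :=
      Finset.sum_range_id_mul_two (N+2)
    have hcast : ((∑ i ∈ Finset.range (N+2), i : ℕ) : ℝ) * 2 = ((N:ℝ)+2) * ((N:ℝ)+1) := by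
      exact_mod_cast congrArg (fun t : ℕ => (t : ℝ)) hnat
    rw [Fin.sum_univ_eq_sum_range (fun i : ℕ => (i : ℝ)) (N+2), ← Nat.cast_sum]
    linarith
  have hexp : (∑ j : Fin (N+2), β j) + (-(∑ i : Fin (N+2), ((i : ℕ) : ℝ)))
      = (∑ k : Fin (N+1), β k.succ) - (((N:ℕ)+1) * (((N:ℕ)+1) + 1) : ℝ) / 2 := by
    rw [hsum, hS]
    push_cast
    ring
  rw [hv, hw]
  rw [show ((x ^ (∑ j : Fin (N+2), β j) : ℝ) : ℂ)
        * (((x ^ (-(∑ i : Fin (N+2), ((i : ℕ) : ℝ))) : ℝ) : ℂ)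
          * (evalRingHom (x:ℂ) (C c * ∏ ℓ, (X - C (z ℓ)) ^ (∑ j : Fin (N+1), ((N+1) - (j : ℕ)) * γ ℓ j))))
      = ((x ^ ((∑ j : Fin (N+2), β j) + (-(∑ i : Fin (N+2), ((i : ℕ) : ℝ)))) : ℝ) : ℂ)
          * (evalRingHom (x:ℂ) (C c * ∏ ℓ, (X - C (z ℓ)) ^ (∑ j : Fin (N+1), ((N+1) - (j : ℕ)) * γ ℓ j)))
    from by rw [Real.rpow_add hx]; push_cast; ring]
  rw [hexp]
  have heval : evalRingHom (x:ℂ) (C c * ∏ ℓ, (X - C (z ℓ)) ^ (∑ j : Fin (N+1), ((N+1) - (j : ℕ)) * γ ℓ j))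
      = c * ∏ ℓ, ((x : ℂ) - z ℓ) ^ (∑ j : Fin (N+1), ((N+1) - (j : ℕ)) * γ ℓ j) := by
    simp [eval_prod]
  rw [heval]
  push_cast
  ring
end

section
/- Let n and m be natural numbers, let β_0, …, β_n be real numbers, and let φ_0, …, φ_n be nonzero polynomials with complex coefficients such that the n+1 real numbers μ_j := β_j + deg φ_j are pairwise distinct. Suppose there exist a nonzero complex constant c, a real number s, complex numbers z_1, …, z_m, and natural numbers e_1, …, e_m such that for every x > 0 the Wronskian at x (with derivatives taken within (0, ∞)) of the n+1 functions t ↦ t^{β_j}·φ_j(t) equals c · x^{s} · ∏_{ℓ=1}^{m} (x − z_ℓ)^{e_ℓ}. Then μ_0 + ⋯ + μ_n − n(n+1)/2 = s + e_1 + ⋯ + e_m; in particular, deg φ_0 + ⋯ + deg φ_n = s + e_1 + ⋯ + e_m − (β_0 + ⋯ + β_n) + n(n+1)/2. -/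
open Polynomial Filter Set



noncomputable def wdcD (α : ℝ) (P : ℂ[X]) : ℂ[X] :=
  Polynomial.C (α : ℂ) * P + Polynomial.X * P.derivative

noncomputable def wdcPsi (b : ℝ) (P : ℂ[X]) : ℕ → ℂ[X]
  | 0 => P
  | (i+1) => wdcD (b - i) (wdcPsi b P i)

lemma wdcD_natDegree_le {P : ℂ[X]} {d : ℕ} (h : P.natDegree ≤ d) (α : ℝ) :
    (wdcD α P).natDegree ≤ d := by
  unfold wdcD
  refine (Polynomial.natDegree_add_le _ _).trans (max_le ?_ ?_)
  · exact (Polynomial.natDegree_C_mul_le _ _).trans h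
  · rcases eq_or_ne P.derivative 0 with h0 | h0
    · simp [h0]
    · have h1 : P.natDegree ≠ 0 := by
        intro hd0
        obtain ⟨a, rfl⟩ := Polynomial.natDegree_eq_zero.mp hd0
        simp at h0
      have h2 := Polynomial.natDegree_derivative_lt h1
      calc (Polynomial.X * P.derivative).natDegree
          ≤ Polynomial.X.natDegree + P.derivative.natDegree := Polynomial.natDegree_mul_le
        _ ≤ 1 + P.derivative.natDegree := by simp
        _ ≤ P.natDegree := by omega
        _ ≤ d := h

lemma wdcD_coeff {P : ℂ[X]} {d : ℕ} (α : ℝ) :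
    (wdcD α P).coeff d = ((α : ℂ) + d) * P.coeff d := by
  unfold wdcD
  rw [Polynomial.coeff_add, Polynomial.coeff_C_mul]
  cases d with
  | zero => simp [Polynomial.mul_coeff_zero]
  | succ k =>
      rw [Polynomial.coeff_X_mul, Polynomial.coeff_derivative]
      push_cast
      ring

lemma wdcPsi_natDegree_le (b : ℝ) (P : ℂ[X]) (i : ℕ) :
    (wdcPsi b P i).natDegree ≤ P.natDegree := by
  induction i with
  | zero => exact le_refl _
  | succ i ih => exact wdcD_natDegree_le ih _

lemma wdcPsi_coeff (b : ℝ) (P : ℂ[X]) (i : ℕ) :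
    (wdcPsi b P i).coeff P.natDegree
      = (∏ k ∈ Finset.range i, (((b : ℂ) + P.natDegree) - k)) * P.coeff P.natDegree := by
  induction i with
  | zero => simp [wdcPsi]
  | succ i ih =>
      rw [show wdcPsi b P (i+1) = wdcD (b - i) (wdcPsi b P i) from rfl,
        wdcD_coeff, ih, Finset.prod_range_succ]
      push_cast
      ring

lemma wdc_hasDerivAt (α : ℝ) (P : ℂ[X]) {x : ℝ} (hx : 0 < x) :
    HasDerivAt (fun t : ℝ => ((t ^ α : ℝ) : ℂ) * P.eval (t : ℂ))
      (((x ^ (α - 1) : ℝ) : ℂ) * (wdcD α P).eval (x : ℂ)) x := by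
  have h1 : HasDerivAt (fun t : ℝ => ((t ^ α : ℝ) : ℂ)) (((α * x ^ (α - 1) : ℝ) : ℂ)) x :=
    (Real.hasDerivAt_rpow_const (p := α) (Or.inl hx.ne')).ofReal_comp
  have h2 : HasDerivAt (fun t : ℝ => P.eval (t : ℂ)) (P.derivative.eval (x : ℂ)) x :=
    (P.hasDerivAt (x : ℂ)).comp_ofReal
  have h3 := h1.mul h2
  refine h3.congr_deriv ?_
  have hxα : ((x ^ α : ℝ) : ℂ) = ((x ^ (α - 1) : ℝ) : ℂ) * (x : ℂ) := by
    rw [← Complex.ofReal_mul, ← Real.rpow_add_one hx.ne' (α - 1)]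
    norm_num
  simp only [wdcD, Polynomial.eval_add, Polynomial.eval_mul, Polynomial.eval_C,
    Polynomial.eval_X, hxα]
  push_cast
  ring

lemma wdc_iter (b : ℝ) (P : ℂ[X]) (i : ℕ) {x : ℝ} (hx : x ∈ Set.Ioi (0 : ℝ)) :
    iteratedDerivWithin i (fun t : ℝ => ((t ^ b : ℝ) : ℂ) * P.eval (t : ℂ)) (Set.Ioi 0) x
      = ((x ^ (b - i) : ℝ) : ℂ) * (wdcPsi b P i).eval (x : ℂ) := by
  induction i generalizing x with
  | zero => simp [wdcPsi]
  | succ i ih =>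
      have hu : UniqueDiffWithinAt ℝ (Set.Ioi (0 : ℝ)) x := isOpen_Ioi.uniqueDiffWithinAt hx
      rw [iteratedDerivWithin_succ]
      have heq : Set.EqOn
          (iteratedDerivWithin i (fun t : ℝ => ((t ^ b : ℝ) : ℂ) * P.eval (t : ℂ)) (Set.Ioi 0))
          (fun t : ℝ => ((t ^ (b - i) : ℝ) : ℂ) * (wdcPsi b P i).eval (t : ℂ)) (Set.Ioi 0) :=
        fun t ht => ih ht
      rw [derivWithin_congr heq (heq hx)]
      have hd := wdc_hasDerivAt (b - i) (wdcPsi b P i) (show (0:ℝ) < x from hx)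
      rw [hd.hasDerivWithinAt.derivWithin hu]
      have he : b - (i : ℝ) - 1 = b - ((i : ℕ) + 1 : ℕ) := by push_cast; ring
      rw [he]
      rfl



lemma wdc_pow_div_tendsto (k D : ℕ) (hk : k ≤ D) :
    Tendsto (fun x : ℝ => (x : ℂ) ^ k / (x : ℂ) ^ D) atTop
      (nhds (if k = D then 1 else 0)) := by
  rcases eq_or_lt_of_le hk with rfl | hlt
  · simp only [if_pos rfl]
    refine Tendsto.congr' ?_ tendsto_const_nhds
    filter_upwards [eventually_gt_atTop (0 : ℝ)] with x hx
    exact (div_self (pow_ne_zero _ (by exact_mod_cast hx.ne' : (x:ℂ) ≠ 0))).symm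
  · rw [if_neg hlt.ne]
    refine squeeze_zero_norm' (a := fun x : ℝ => x⁻¹) ?_ tendsto_inv_atTop_zero
    filter_upwards [eventually_ge_atTop (1 : ℝ)] with x hx
    have hx0 : (0 : ℝ) < x := lt_of_lt_of_le one_pos hx
    have hxk : (0 : ℝ) < x ^ k := pow_pos hx0 k
    rw [norm_div, norm_pow, norm_pow, Complex.norm_real, Real.norm_eq_abs,
      abs_of_pos hx0]
    have hsplit : x ^ D = x ^ k * x ^ (D - k) := by
      rw [← pow_add]
      congr 1
      omega
    rw [hsplit, div_mul_eq_div_div, div_self hxk.ne', one_div]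
    rw [inv_le_inv₀ (lt_of_lt_of_le hx0 (le_self_pow₀ hx (by omega))) hx0]
    exact le_self_pow₀ hx (by omega)

lemma wdc_eval_div_tendsto (Q : ℂ[X]) (D : ℕ) (h : Q.natDegree ≤ D) :
    Tendsto (fun x : ℝ => Q.eval (x : ℂ) / (x : ℂ) ^ D) atTop (nhds (Q.coeff D)) := by
  have h2 : ∀ x : ℝ, Q.eval (x : ℂ) / (x : ℂ) ^ D
      = ∑ k ∈ Finset.range (D + 1), Q.coeff k * ((x : ℂ) ^ k / (x : ℂ) ^ D) := by
    intro x
    rw [Polynomial.eval_eq_sum_range' (Nat.lt_succ_of_le h), Finset.sum_div]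
    simp [mul_div_assoc]
  simp only [h2]
  have h3 := tendsto_finset_sum (Finset.range (D + 1))
    (fun k hk => (wdc_pow_div_tendsto k D (Nat.lt_succ_iff.mp (Finset.mem_range.mp hk))).const_mul
      (Q.coeff k))
  convert h3 using 2
  rw [eq_comm, Finset.sum_congr rfl (fun k _ => by rw [mul_ite, mul_one, mul_zero]),
    Finset.sum_ite_eq' (Finset.range (D + 1)) D Q.coeff, if_pos (Finset.self_mem_range_succ D)]



lemma wdc_coeff_prod {ι : Type*} (s : Finset ι) (f : ι → ℂ[X]) (dg : ι → ℕ)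
    (h : ∀ i ∈ s, (f i).natDegree ≤ dg i) :
    (∏ i ∈ s, f i).coeff (∑ i ∈ s, dg i) = ∏ i ∈ s, (f i).coeff (dg i) := by
  classical
  induction s using Finset.cons_induction with
  | empty => simp
  | cons a s ha ih =>
      rw [Finset.prod_cons, Finset.sum_cons, Finset.prod_cons,
        Polynomial.coeff_mul_add_eq_of_natDegree_le (h a (Finset.mem_cons_self a s))
          ((Polynomial.natDegree_prod_le _ _).trans
            (Finset.sum_le_sum fun i hi => h i (Finset.mem_cons_of_mem hi))),
        ih fun i hi => h i (Finset.mem_cons_of_mem hi)]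

lemma wdc_coeff_det {N : ℕ} (M : Matrix (Fin N) (Fin N) ℂ[X]) (dg : Fin N → ℕ)
    (h : ∀ i j, (M i j).natDegree ≤ dg j) :
    (M.det).coeff (∑ j, dg j) = (Matrix.of fun i j => (M i j).coeff (dg j)).det := by
  rw [Matrix.det_apply, Matrix.det_apply, Polynomial.finset_sum_coeff]
  refine Finset.sum_congr rfl fun σ _ => ?_
  rw [Polynomial.coeff_smul, wdc_coeff_prod Finset.univ (fun i => M (σ i) i) dg
    (fun i _ => h (σ i) i)]
  rfl

set_option maxHeartbeats 1000000 in
lemma wdc_natDegree_det_le {N : ℕ} (M : Matrix (Fin N) (Fin N) ℂ[X]) (dg : Fin N → ℕ)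
    (h : ∀ i j, (M i j).natDegree ≤ dg j) :
    (M.det).natDegree ≤ ∑ j, dg j := by
  rw [Matrix.det_apply]
  refine Polynomial.natDegree_sum_le_of_forall_le Finset.univ (fun σ => Equiv.Perm.sign σ • ∏ i, M (σ i) i) (fun σ _ => ?_)
  show (Equiv.Perm.sign σ • ∏ i : Fin N, M (σ i) i).natDegree ≤ ∑ j : Fin N, dg j
  rw [Units.smul_def, zsmul_eq_mul]
  refine Polynomial.natDegree_mul_le.trans ?_
  rw [Polynomial.natDegree_intCast, zero_add]
  exact (Polynomial.natDegree_prod_le _ _).trans (Finset.sum_le_sum fun i _ => h (σ i) i)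

/-- Degree count from the Wronskian: if the Wronskian of `t ↦ t^{β_j} φ_j(t)` equals
`c · x^s · ∏_ℓ (x − z_ℓ)^{e_ℓ}` on `(0,∞)`, with `μ_j = β_j + deg φ_j` pairwise distinct,
then `Σ μ_j − n(n+1)/2 = s + Σ e_ℓ`, hence
`Σ deg φ_j = s + Σ e_ℓ − Σ β_j + n(n+1)/2`. -/
theorem wronskian_degree_count (n m : ℕ) (β : Fin (n + 1) → ℝ)
    (φ : Fin (n + 1) → Polynomial ℂ) (hφ : ∀ j, φ j ≠ 0)
    (μ : Fin (n + 1) → ℝ) (hμ : ∀ j, μ j = β j + ((φ j).natDegree : ℝ))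
    (hinj : Function.Injective μ)
    (c : ℂ) (hc : c ≠ 0) (s : ℝ) (z : Fin m → ℂ) (e : Fin m → ℕ)
    (hW : ∀ x : ℝ, 0 < x →
      Matrix.det (Matrix.of fun i j : Fin (n + 1) =>
        iteratedDerivWithin (i : ℕ)
          (fun t : ℝ => ((t ^ β j : ℝ) : ℂ) * (φ j).eval (t : ℂ)) (Set.Ioi (0 : ℝ)) x) =
      c * ((x ^ s : ℝ) : ℂ) * ∏ ℓ, ((x : ℂ) - z ℓ) ^ e ℓ) :
    (∑ j, μ j) - (n * (n + 1) : ℝ) / 2 = s + ∑ ℓ, (e ℓ : ℝ) ∧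
    (∑ j, ((φ j).natDegree : ℝ)) =
      s + (∑ ℓ, (e ℓ : ℝ)) - (∑ j, β j) + (n * (n + 1) : ℝ) / 2 := by
  classical
  set d : Fin (n + 1) → ℕ := fun j => (φ j).natDegree with hd
  set Dtot : ℕ := ∑ j, d j with hDtot
  set Etot : ℕ := ∑ ℓ, e ℓ with hEtot
  set B : ℝ := ∑ j, β j with hB
  set Tr : ℝ := ∑ i : Fin (n + 1), ((i : ℕ) : ℝ) with hTrdef
  set Ψ : Matrix (Fin (n + 1)) (Fin (n + 1)) ℂ[X] :=
    Matrix.of fun i j => wdcPsi (β j) (φ j) (i : ℕ) with hΨ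
  set Q : ℂ[X] := Ψ.det with hQ
  set R : ℂ[X] := ∏ ℓ, (Polynomial.X - Polynomial.C (z ℓ)) ^ e ℓ with hR
  have hdle : ∀ i j, (Ψ i j).natDegree ≤ d j := fun i j => wdcPsi_natDegree_le _ _ _
  have hQdeg : Q.natDegree ≤ Dtot := wdc_natDegree_det_le Ψ d hdle
  -- determinant identity
  have hdet : ∀ x : ℝ, 0 < x →
      (Matrix.of fun i j : Fin (n + 1) =>
        ((x ^ (β j - (i : ℕ)) : ℝ) : ℂ) * (Ψ i j).eval (x : ℂ)).det
        = ((x ^ (B - Tr) : ℝ) : ℂ) * Q.eval (x : ℂ) := by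
    intro x hx
    have h1 : (Matrix.of fun i j : Fin (n + 1) =>
        ((x ^ (β j - (i : ℕ)) : ℝ) : ℂ) * (Ψ i j).eval (x : ℂ))
        = Matrix.of (fun i j : Fin (n + 1) =>
            ((x ^ (β j) : ℝ) : ℂ) *
              ((Matrix.of fun i j : Fin (n + 1) =>
                ((x ^ (-((i : ℕ) : ℝ)) : ℝ) : ℂ) * ((Ψ i j).eval (x : ℂ))) i j)) := by
      ext i j
      simp only [Matrix.of_apply]
      rw [← mul_assoc, ← Complex.ofReal_mul, ← Real.rpow_add hx]
      ring_nf
    rw [h1, Matrix.det_mul_row]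
    rw [show (Matrix.of fun i j : Fin (n + 1) => ((x ^ (-((i : ℕ) : ℝ)) : ℝ) : ℂ) * (Ψ i j).eval (x : ℂ)).det = (∏ i : Fin (n + 1), ((x ^ (-((i : ℕ) : ℝ)) : ℝ) : ℂ)) * (Matrix.det fun i j : Fin (n + 1) => (Ψ i j).eval (x : ℂ)) from Matrix.det_mul_column _ _]
    have h2 : (Matrix.det fun i j : Fin (n + 1) => (Ψ i j).eval (x : ℂ))
        = Q.eval (x : ℂ) := by
      have h3 := (Polynomial.evalRingHom (x : ℂ)).map_det Ψ
      simp only [Polynomial.coe_evalRingHom] at h3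
      rw [hQ, h3]
      rfl
    rw [h2]
    have h4 : (∏ j : Fin (n + 1), ((x ^ (β j) : ℝ) : ℂ)) = ((x ^ B : ℝ) : ℂ) := by
      rw [← Complex.ofReal_prod, hB, Real.rpow_sum_of_pos hx]
    have h5 : (∏ i : Fin (n + 1), ((x ^ (-((i : ℕ) : ℝ)) : ℝ) : ℂ)) = ((x ^ (-Tr) : ℝ) : ℂ) := by
      rw [← Complex.ofReal_prod, ← Real.rpow_sum_of_pos hx, hTrdef, ← Finset.sum_neg_distrib]
    rw [h4, h5, ← mul_assoc, ← Complex.ofReal_mul, ← Real.rpow_add hx]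
    ring_nf
  -- key identity
  have hkey : ∀ x : ℝ, 0 < x →
      ((x ^ (B - Tr) : ℝ) : ℂ) * Q.eval (x : ℂ) = c * ((x ^ s : ℝ) : ℂ) * R.eval (x : ℂ) := by
    intro x hx
    have hmx : (Matrix.of fun i j : Fin (n + 1) =>
        iteratedDerivWithin (i : ℕ)
          (fun t : ℝ => ((t ^ β j : ℝ) : ℂ) * (φ j).eval (t : ℂ)) (Set.Ioi (0 : ℝ)) x)
        = Matrix.of fun i j : Fin (n + 1) =>
            ((x ^ (β j - (i : ℕ)) : ℝ) : ℂ) * (Ψ i j).eval (x : ℂ) := by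
      ext i j
      exact wdc_iter (β j) (φ j) (i : ℕ) hx
    have hRe : R.eval (x : ℂ) = ∏ ℓ, ((x : ℂ) - z ℓ) ^ e ℓ := by
      simp [hR, Polynomial.eval_prod]
    rw [← hdet x hx, ← hmx, hW x hx, hRe]
  -- leading coefficient of Q
  set μc : Fin (n + 1) → ℂ := fun j => ((μ j : ℝ) : ℂ) with hμc
  set p : Fin (n + 1) → ℂ[X] :=
    fun i => ∏ k ∈ Finset.range (i : ℕ), (Polynomial.X - Polynomial.C (k : ℂ)) with hp
  have hpdeg : ∀ i : Fin (n + 1), (p i).natDegree = (i : ℕ) := by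
    intro i
    rw [hp]
    rw [Polynomial.natDegree_prod _ _ fun k _ => Polynomial.X_sub_C_ne_zero _]
    simp only [Polynomial.natDegree_X_sub_C, Finset.sum_const, Finset.card_range, smul_eq_mul,
      mul_one]
  have hpmonic : ∀ i : Fin (n + 1), (p i).Monic :=
    fun i => Polynomial.monic_prod_of_monic _ _ fun k _ => Polynomial.monic_X_sub_C _
  have hcoeffψ : ∀ i j : Fin (n + 1), (Ψ i j).coeff (d j)
      = (φ j).coeff (d j) * (p i).eval (μc j) := by
    intro i j
    have h6 : (p i).eval (μc j) = ∏ k ∈ Finset.range (i : ℕ), (μc j - (k : ℂ)) := by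
      simp [hp, Polynomial.eval_prod]
    have h7 : μc j = ((β j : ℝ) : ℂ) + ((d j : ℕ) : ℂ) := by
      rw [hμc]
      push_cast [hμ j]
      ring
    rw [h6, h7]
    rw [show (Ψ i j) = wdcPsi (β j) (φ j) (i : ℕ) from rfl, wdcPsi_coeff (β j) (φ j) (i : ℕ)]
    ring
  have hLval : Q.coeff Dtot
      = (∏ j, (φ j).coeff (d j)) * (Matrix.vandermonde μc).det := by
    rw [hQ, hDtot, wdc_coeff_det Ψ d hdle]
    have h8 : (Matrix.of fun i j : Fin (n + 1) => (Ψ i j).coeff (d j))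
        = Matrix.of fun i j : Fin (n + 1) =>
            (φ j).coeff (d j) * ((Matrix.of fun i j : Fin (n + 1) => (p i).eval (μc j)) i j) := by
      ext i j
      simp only [Matrix.of_apply]
      exact hcoeffψ i j
    rw [h8, Matrix.det_mul_row]
    congr 1
    calc (Matrix.of fun i j : Fin (n + 1) => (p i).eval (μc j)).det
        = (Matrix.transpose (Matrix.of fun i j : Fin (n + 1) => (p j).eval (μc i))).det := by
          congr 1
      _ = (Matrix.of fun i j : Fin (n + 1) => (p j).eval (μc i)).det :=
          Matrix.det_transpose _
      _ = (Matrix.vandermonde μc).det :=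
          (Matrix.det_eval_matrixOfPolynomials_eq_det_vandermonde μc p hpdeg hpmonic).symm
  have hLne : Q.coeff Dtot ≠ 0 := by
    rw [hLval]
    refine mul_ne_zero ?_ ?_
    · exact Finset.prod_ne_zero_iff.mpr fun j _ =>
        Polynomial.leadingCoeff_ne_zero.mpr (hφ j)
    · refine Matrix.det_vandermonde_ne_zero_iff.mpr ?_
      intro j k hjk
      refine hinj ?_
      have : ((μ j : ℝ) : ℂ) = ((μ k : ℝ) : ℂ) := hjk
      exact_mod_cast this
  -- facts about R
  have hRmonic : R.Monic :=
    Polynomial.monic_prod_of_monic _ _ fun ℓ _ => (Polynomial.monic_X_sub_C (z ℓ)).pow (e ℓ)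
  have hRdeg : R.natDegree = Etot := by
    rw [hR, Polynomial.natDegree_prod _ _
      fun ℓ _ => pow_ne_zero _ (Polynomial.X_sub_C_ne_zero (z ℓ))]
    simp only [Polynomial.natDegree_pow, Polynomial.natDegree_X_sub_C, mul_one, hEtot]
  have hRcoeff : R.coeff Etot = 1 := by
    rw [← hRdeg]
    exact hRmonic.coeff_natDegree
  -- limits
  have hQt : Tendsto (fun x : ℝ => Q.eval (x : ℂ) / (x : ℂ) ^ Dtot) atTop
      (nhds (Q.coeff Dtot)) := wdc_eval_div_tendsto Q Dtot hQdeg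
  have hRt : Tendsto (fun x : ℝ => R.eval (x : ℂ) / (x : ℂ) ^ Etot) atTop (nhds 1) := by
    have := wdc_eval_div_tendsto R Etot hRdeg.le
    rwa [hRcoeff] at this
  set a : ℝ := (B - Tr + (Dtot : ℝ)) - (s + (Etot : ℝ)) with ha
  have hLpos : 0 < ‖Q.coeff Dtot‖ := norm_pos_iff.mpr hLne
  have hta : Tendsto (fun x : ℝ => x ^ a) atTop (nhds (‖c‖ / ‖Q.coeff Dtot‖)) := by
    have hf1 : Tendsto (fun x : ℝ => ‖Q.eval (x : ℂ) / (x : ℂ) ^ Dtot‖) atTop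
        (nhds ‖Q.coeff Dtot‖) := hQt.norm
    have hf2 : Tendsto (fun x : ℝ => ‖c‖ * ‖R.eval (x : ℂ) / (x : ℂ) ^ Etot‖) atTop
        (nhds (‖c‖ * ‖(1 : ℂ)‖)) := tendsto_const_nhds.mul hRt.norm
    rw [norm_one, mul_one] at hf2
    have hdiv := hf2.div hf1 (ne_of_gt hLpos)
    refine Tendsto.congr' ?_ hdiv
    filter_upwards [eventually_gt_atTop (0 : ℝ),
      hf1.eventually (eventually_gt_nhds (half_lt_self hLpos))] with x hx0 hf1pos
    have hxC : (x : ℂ) ≠ 0 := by exact_mod_cast hx0.ne'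
    have hnormpow : ∀ N : ℕ, ‖(x : ℂ) ^ N‖ = x ^ ((N : ℕ) : ℝ) := by
      intro N
      rw [norm_pow, Complex.norm_real, Real.norm_eq_abs, abs_of_pos hx0, Real.rpow_natCast]
    have hfq : ‖Q.eval (x : ℂ) / (x : ℂ) ^ Dtot‖
        = ‖Q.eval (x : ℂ)‖ / x ^ ((Dtot : ℕ) : ℝ) := by
      rw [norm_div, hnormpow]
    have hfr : ‖R.eval (x : ℂ) / (x : ℂ) ^ Etot‖
        = ‖R.eval (x : ℂ)‖ / x ^ ((Etot : ℕ) : ℝ) := by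
      rw [norm_div, hnormpow]
    set qn := ‖Q.eval (x : ℂ)‖ with hqndef
    set rn := ‖R.eval (x : ℂ)‖ with hrndef
    have hpow : ∀ y : ℝ, 0 < x ^ y := fun y => Real.rpow_pos_of_pos hx0 y
    have hqnpos : 0 < qn := by
      rw [hfq] at hf1pos
      have h01 : 0 < qn / x ^ ((Dtot : ℕ) : ℝ) := lt_trans (half_pos hLpos) hf1pos
      have h02 := mul_pos h01 (hpow ((Dtot : ℕ) : ℝ))
      rwa [div_mul_cancel₀ _ (hpow ((Dtot : ℕ) : ℝ)).ne'] at h02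
    -- norm of the key identity
    have hkn : x ^ (B - Tr) * qn = ‖c‖ * x ^ s * rn := by
      have h03 := congrArg norm (hkey x hx0)
      rw [norm_mul, norm_mul, norm_mul, Complex.norm_real, Complex.norm_real,
        Real.norm_eq_abs, Real.norm_eq_abs, abs_of_pos (hpow (B - Tr)),
        abs_of_pos (hpow s)] at h03
      exact h03
    have key2 : ‖c‖ * rn = x ^ (B - Tr - s) * qn := by
      have hs0 := (hpow s).ne'
      rw [Real.rpow_sub hx0, div_mul_eq_mul_div, eq_div_iff hs0]
      linear_combination -hkn
    simp only [Pi.div_apply]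
    rw [hfq, hfr]
    have e1 : ‖c‖ * (rn / x ^ ((Etot : ℕ) : ℝ)) / (qn / x ^ ((Dtot : ℕ) : ℝ))
        = (‖c‖ * rn) * x ^ ((Dtot : ℕ) : ℝ) / (x ^ ((Etot : ℕ) : ℝ) * qn) := by
      field_simp
    have e2 : (x ^ (B - Tr - s) * qn) * x ^ ((Dtot : ℕ) : ℝ)
          / (x ^ ((Etot : ℕ) : ℝ) * qn)
        = x ^ (B - Tr - s) * x ^ ((Dtot : ℕ) : ℝ) / x ^ ((Etot : ℕ) : ℝ) := by
      rw [mul_right_comm (x ^ (B - Tr - s)) qn, mul_comm (x ^ ((Etot : ℕ) : ℝ)) qn,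
        ← div_div, mul_div_assoc, div_self hqnpos.ne',
        mul_one]
    rw [e1, key2, e2, ← Real.rpow_add hx0, ← Real.rpow_sub hx0]
    congr 1
    rw [ha]
    ring
  -- conclude a = 0
  have ha0 : a = 0 := by
    rcases lt_trichotomy a 0 with hlt | heq | hgt
    · exfalso
      have h0 : Tendsto (fun x : ℝ => x ^ a) atTop (nhds 0) := by
        have := tendsto_rpow_neg_atTop (show (0 : ℝ) < -a by linarith)
        simpa using this
      have hu : ‖c‖ / ‖Q.coeff Dtot‖ = 0 := tendsto_nhds_unique hta h0
      have hp : 0 < ‖c‖ / ‖Q.coeff Dtot‖ := div_pos (norm_pos_iff.mpr hc) hLpos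
      linarith
    · exact heq
    · exact absurd hta (not_tendsto_nhds_of_tendsto_atTop (tendsto_rpow_atTop hgt) _)
  have hBT : B - Tr + (Dtot : ℝ) = s + (Etot : ℝ) := by
    rw [ha] at ha0
    linarith
  have hTr2 : Tr = (n * (n + 1) : ℝ) / 2 := by
    have h1 : Tr = ∑ i ∈ Finset.range (n + 1), (i : ℝ) := by
      rw [hTrdef, Fin.sum_univ_eq_sum_range (fun i => (i : ℝ)) (n + 1)]
    have h2 : (∑ i ∈ Finset.range (n + 1), i) * 2 = (n + 1) * n := by
      simpa using Finset.sum_range_id_mul_two (n + 1)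
    have h3 : (∑ i ∈ Finset.range (n + 1), (i : ℝ)) * 2 = ((n + 1) : ℝ) * n := by
      have h4 := congrArg (Nat.cast : ℕ → ℝ) h2
      push_cast at h4
      exact h4
    rw [h1]
    linarith
  have hμsum : (∑ j, μ j) = B + (Dtot : ℝ) := by
    calc ∑ j, μ j = ∑ j, (β j + ((d j : ℕ) : ℝ)) := Finset.sum_congr rfl fun j _ => hμ j
      _ = (∑ j, β j) + ∑ j, ((d j : ℕ) : ℝ) := Finset.sum_add_distrib
      _ = B + (Dtot : ℝ) := by rw [hB, hDtot, Nat.cast_sum]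
  have hesum : (∑ ℓ, ((e ℓ : ℕ) : ℝ)) = (Etot : ℝ) := by
    rw [hEtot, Nat.cast_sum]
  have hdsum : (∑ j, (((φ j).natDegree : ℕ) : ℝ)) = (Dtot : ℝ) := by
    rw [hDtot, Nat.cast_sum]
  constructor
  · rw [hμsum, hesum]
    linarith
  · rw [hdsum, hesum]
    linarith
end
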